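/- arXiv:1610.09850 — 5 statements merged into one kernel-verified Lean document; each statement's English description precedes it below -/
import Mathlib

section
/- For every (x,t) ∈ G* the squared horizontal gradient of the Kaplan norm satisfies |∇_H N(x,t)|² = (|x|⁶ + 16 |J_t x|²) / N(x,t)⁶, where J_t = t_1 J_1 + ⋯ + t_m J_m. -/
open MeasureTheory Filter
open scoped BigOperators ENNReal NNReal

noncomputable section

/-- Points of the Métivier group `G = ℝ^{2n} × ℝ^m`. -/
abbrev GrpPt (n m : ℕ) := (Fin (2*n) → ℝ) × (Fin m → ℝ)

/-- Euclidean norm on `Fin k → ℝ`. -/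
def e2norm {k : ℕ} (x : Fin k → ℝ) : ℝ := Real.sqrt (∑ i, (x i)^2)

/-- Kaplan norm `N(x,t) = (|x|^4 + 16|t|^2)^(1/4)`. -/
def kN {n m : ℕ} (p : GrpPt n m) : ℝ := (e2norm p.1 ^ 4 + 16 * e2norm p.2 ^ 2) ^ ((1:ℝ)/4)

/-- Group multiplication of the Métivier group. -/
def gmul {n m : ℕ} (J : Fin m → Matrix (Fin (2*n)) (Fin (2*n)) ℝ) (p q : GrpPt n m) : GrpPt n m :=
  (p.1 + q.1, p.2 + q.2 + fun k => (1/2 : ℝ) * ∑ i, (J k).mulVec p.1 i * q.1 i)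

/-- Horizontal left-invariant vector field `X_j`. -/
def XD {n m : ℕ} (J : Fin m → Matrix (Fin (2*n)) (Fin (2*n)) ℝ)
    {E : Type*} [NormedAddCommGroup E] [NormedSpace ℝ E]
    (j : Fin (2*n)) (f : GrpPt n m → E) (p : GrpPt n m) : E :=
  fderiv ℝ f p (Pi.single j 1, 0)
    + (1/2 : ℝ) • ∑ k, ((J k).mulVec p.1 j) • fderiv ℝ f p (0, Pi.single k 1)

/-- Squared length of the horizontal gradient. -/
def gradSq {n m : ℕ} (J : Fin m → Matrix (Fin (2*n)) (Fin (2*n)) ℝ)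
    (f : GrpPt n m → ℝ) (p : GrpPt n m) : ℝ := ∑ j, (XD J j f p)^2

/-- Sub-Laplacian `L f = -∑ X_j (X_j f)`. -/
def LSub {n m : ℕ} (J : Fin m → Matrix (Fin (2*n)) (Fin (2*n)) ℝ)
    {E : Type*} [NormedAddCommGroup E] [NormedSpace ℝ E]
    (f : GrpPt n m → E) (p : GrpPt n m) : E := - ∑ j, XD J j (XD J j f) p

/-- Weight `w_α = exp (-N^α)`. -/
def wA {n m : ℕ} (α : ℝ) (p : GrpPt n m) : ℝ := Real.exp (-(kN p ^ α))

/-- Potential `V_α = -(1/4) |grad w_α|²/w_α² - (1/2) (L w_α)/w_α`. -/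
def VA {n m : ℕ} (J : Fin m → Matrix (Fin (2*n)) (Fin (2*n)) ℝ) (α : ℝ) (p : GrpPt n m) : ℝ :=
  -(1/4) * gradSq J (wA α) p / (wA α p)^2 - (1/2) * LSub J (wA α) p / wA α p

/-! ### Auxiliary machinery -/

/-- First-factor coordinate projection as a continuous linear map. -/
def pr1 {n m : ℕ} (i : Fin (2*n)) : GrpPt n m →L[ℝ] ℝ :=
  (ContinuousLinearMap.proj i).comp (ContinuousLinearMap.fst ℝ _ _)

/-- Second-factor coordinate projection as a continuous linear map. -/
def pr2 {n m : ℕ} (k : Fin m) : GrpPt n m →L[ℝ] ℝ :=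
  (ContinuousLinearMap.proj k).comp (ContinuousLinearMap.snd ℝ _ _)

@[simp] lemma pr1_apply {n m : ℕ} (i : Fin (2*n)) (q : GrpPt n m) : pr1 i q = q.1 i := rfl
@[simp] lemma pr2_apply {n m : ℕ} (k : Fin m) (q : GrpPt n m) : pr2 k q = q.2 k := rfl

lemma hS1 {n m : ℕ} (p : GrpPt n m) :
    HasFDerivAt (fun q : GrpPt n m => ∑ i, (q.1 i)^2) (∑ i, (2 * p.1 i) • pr1 (m := m) i) p := by
  apply HasFDerivAt.fun_sum
  intro i _
  have h := (pr1 (n := n) (m := m) i).hasFDerivAt (x := p)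
  have h2 := h.fun_mul h
  have key : ((2:ℝ) * p.1 i) • pr1 (n := n) (m := m) i
      = (pr1 (n := n) (m := m) i) p • pr1 i + (pr1 i) p • pr1 i := by
    ext q <;> simp only [ContinuousLinearMap.add_apply, ContinuousLinearMap.smul_apply,
      ContinuousLinearMap.comp_apply, ContinuousLinearMap.inr_apply,
      ContinuousLinearMap.inl_apply, smul_eq_mul, pr1_apply, pr2_apply] <;> ring
  rw [key]
  simpa only [pow_two, pr1_apply] using h2

lemma hS2 {n m : ℕ} (p : GrpPt n m) :
    HasFDerivAt (fun q : GrpPt n m => ∑ k, (q.2 k)^2) (∑ k, (2 * p.2 k) • pr2 (n := n) k) p := by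
  apply HasFDerivAt.fun_sum
  intro k _
  have h := (pr2 (n := n) (m := m) k).hasFDerivAt (x := p)
  have h2 := h.fun_mul h
  have key : ((2:ℝ) * p.2 k) • pr2 (n := n) (m := m) k
      = (pr2 (n := n) (m := m) k) p • pr2 k + (pr2 k) p • pr2 k := by
    ext q <;> simp only [ContinuousLinearMap.add_apply, ContinuousLinearMap.smul_apply,
      ContinuousLinearMap.comp_apply, ContinuousLinearMap.inr_apply,
      ContinuousLinearMap.inl_apply, smul_eq_mul, pr1_apply, pr2_apply] <;> ring
  rw [key]
  simpa only [pow_two, pr2_apply] using h2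

/-- The radial polynomial `|x|⁴ + 16|t|²` written without square roots. -/
def Rho {n m : ℕ} (p : GrpPt n m) : ℝ := (∑ i, (p.1 i)^2)^2 + 16 * ∑ k, (p.2 k)^2

lemma kN_eq {n m : ℕ} (q : GrpPt n m) : kN q = Rho q ^ ((1:ℝ)/4) := by
  unfold kN Rho e2norm
  congr 1
  have h1 : (0:ℝ) ≤ ∑ i, (q.1 i)^2 := Finset.sum_nonneg fun i _ => sq_nonneg _
  have h2 : (0:ℝ) ≤ ∑ k, (q.2 k)^2 := Finset.sum_nonneg fun k _ => sq_nonneg _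
  rw [show (4:ℕ) = 2*2 from rfl, pow_mul, Real.sq_sqrt h1, Real.sq_sqrt h2]

/-- The Fréchet derivative of `Rho`. -/
def DRho {n m : ℕ} (p : GrpPt n m) : GrpPt n m →L[ℝ] ℝ :=
  (2 * ∑ i, (p.1 i)^2) • (∑ i, (2 * p.1 i) • pr1 i) + (16:ℝ) • (∑ k, (2 * p.2 k) • pr2 k)

lemma hRho {n m : ℕ} (p : GrpPt n m) : HasFDerivAt Rho (DRho p) p := by
  have h1 := hS1 p
  have hsq := h1.fun_mul h1
  have h2 := (hS2 p).const_mul (16:ℝ)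
  have h3 := hsq.fun_add h2
  have key : DRho p = ((∑ i, (p.1 i)^2) • (∑ i, (2 * p.1 i) • pr1 (m := m) i)
      + (∑ i, (p.1 i)^2) • (∑ i, (2 * p.1 i) • pr1 i)) + (16:ℝ) • (∑ k, (2 * p.2 k) • pr2 k) := by
    unfold DRho
    congr 1
    ext q <;> simp only [ContinuousLinearMap.add_apply, ContinuousLinearMap.smul_apply,
      ContinuousLinearMap.sum_apply, ContinuousLinearMap.comp_apply,
      ContinuousLinearMap.inr_apply, ContinuousLinearMap.inl_apply, smul_eq_mul,
      pr1_apply, pr2_apply] <;> ring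
  rw [key]
  unfold Rho
  simpa only [pow_two] using h3

lemma rho_pos {n m : ℕ} (p : GrpPt n m) (hp : p ≠ 0) : 0 < Rho p := by
  have h1 : (0:ℝ) ≤ (∑ i, (p.1 i)^2)^2 := sq_nonneg _
  have h2 : (0:ℝ) ≤ ∑ k, (p.2 k)^2 := Finset.sum_nonneg fun k _ => sq_nonneg _
  by_cases hx : p.1 = 0
  · have ht : p.2 ≠ 0 := fun h2' => hp (Prod.ext hx h2')
    obtain ⟨k, hk⟩ := Function.ne_iff.mp ht
    have : 0 < ∑ k, (p.2 k)^2 :=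
      Finset.sum_pos' (fun k _ => sq_nonneg _) ⟨k, Finset.mem_univ k, sq_pos_of_ne_zero hk⟩
    unfold Rho; nlinarith
  · obtain ⟨i, hi⟩ := Function.ne_iff.mp hx
    have : 0 < ∑ i, (p.1 i)^2 :=
      Finset.sum_pos' (fun i _ => sq_nonneg _) ⟨i, Finset.mem_univ i, sq_pos_of_ne_zero hi⟩
    unfold Rho; nlinarith

lemma hkN {n m : ℕ} (p : GrpPt n m) (hp : p ≠ 0) :
    HasFDerivAt kN ((((1:ℝ)/4) * Rho p ^ ((1:ℝ)/4 - 1)) • DRho p) p := by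
  have h := (hRho p).rpow_const (p := (1:ℝ)/4) (Or.inl (rho_pos p hp).ne')
  have hfun : kN = fun q : GrpPt n m => Rho q ^ ((1:ℝ)/4) := funext kN_eq
  rw [hfun]
  exact h

lemma DRho_apply1 {n m : ℕ} (p : GrpPt n m) (j : Fin (2*n)) :
    DRho p ((Pi.single j 1 : Fin (2*n) → ℝ), (0 : Fin m → ℝ))
      = (2 * ∑ i, (p.1 i)^2) * (2 * p.1 j) := by
  simp [DRho, ContinuousLinearMap.sum_apply, Pi.single_apply, mul_ite,
    Finset.sum_ite_eq', smul_eq_mul]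

lemma DRho_apply2 {n m : ℕ} (p : GrpPt n m) (k : Fin m) :
    DRho p ((0 : Fin (2*n) → ℝ), (Pi.single k 1 : Fin m → ℝ)) = 16 * (2 * p.2 k) := by
  simp [DRho, ContinuousLinearMap.sum_apply, Pi.single_apply, mul_ite,
    Finset.sum_ite_eq', smul_eq_mul]

lemma sum_smul_mulVec {n m : ℕ} (J : Fin m → Matrix (Fin (2*n)) (Fin (2*n)) ℝ)
    (t : Fin m → ℝ) (x : Fin (2*n) → ℝ) (j : Fin (2*n)) :
    (∑ k, t k • J k).mulVec x j = ∑ k, t k * (J k).mulVec x j := by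
  simp only [Matrix.mulVec, dotProduct, Matrix.sum_apply, Matrix.smul_apply,
    smul_eq_mul, Finset.sum_mul, Finset.mul_sum, mul_assoc]
  rw [Finset.sum_comm]

open scoped Matrix in
lemma cross_zero {n m : ℕ} (J : Fin m → Matrix (Fin (2*n)) (Fin (2*n)) ℝ)
    (hskew : ∀ k, (J k).transpose = -(J k)) (t : Fin m → ℝ) (x : Fin (2*n) → ℝ) :
    ∑ j, x j * (∑ k, t k • J k).mulVec x j = 0 := by
  set A := ∑ k, t k • J k with hA
  have hAT : Aᵀ = -A := by
    rw [hA, Matrix.transpose_sum]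
    simp only [Matrix.transpose_smul, hskew, smul_neg]
    rw [← Finset.sum_neg_distrib]
  have h1 : x ⬝ᵥ (A *ᵥ x) = (x ᵥ* A) ⬝ᵥ x := Matrix.dotProduct_mulVec x A x
  have h2 : x ᵥ* A = -(A *ᵥ x) := by
    have := Matrix.vecMul_transpose A x
    rw [hAT] at this
    rw [← this]
    simp [Matrix.vecMul_neg]
  have h4 : x ⬝ᵥ (A *ᵥ x) = 0 := by
    rw [h2, neg_dotProduct, dotProduct_comm] at h1
    rw [dotProduct_comm]
    linarith
  simpa [dotProduct] using h4

/-- Formula for the squared horizontal gradient of the Kaplan norm on `G*`. -/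
theorem gradSq_kaplan (n m : ℕ) (hn : 1 ≤ n) (hm : 1 ≤ m)
    (J : Fin m → Matrix (Fin (2*n)) (Fin (2*n)) ℝ)
    (hskew : ∀ k, (J k).transpose = -(J k))
    (hMet : ∀ t : Fin m → ℝ, t ≠ 0 → IsUnit (∑ k, t k • J k)) :
    ∀ p : GrpPt n m, p ≠ 0 →
      gradSq J kN p
        = (e2norm p.1 ^ 6 + 16 * e2norm ((∑ k, p.2 k • J k).mulVec p.1) ^ 2) / kN p ^ 6 := by
  intro p hp
  have hR : 0 < Rho p := rho_pos p hp
  set S : ℝ := ∑ i, (p.1 i)^2 with hS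
  have hSnn : 0 ≤ S := Finset.sum_nonneg fun i _ => sq_nonneg _
  set E : ℝ := Rho p ^ ((1:ℝ)/4 - 1) with hE
  set c : ℝ := ((1:ℝ)/4) * E with hc
  set w : Fin (2*n) → ℝ := (∑ k, p.2 k • J k).mulVec p.1 with hw
  have hf : fderiv ℝ kN p = c • DRho p := (hkN p hp).fderiv
  -- value of the horizontal vector fields
  have hX : ∀ j, XD J j kN p = 4 * c * (S * p.1 j + 4 * w j) := by
    intro j
    rw [XD, hf]
    simp only [ContinuousLinearMap.smul_apply, smul_eq_mul, DRho_apply1, DRho_apply2]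
    have hsum : ∑ k, (J k).mulVec p.1 j * (c * (16 * (2 * p.2 k)))
        = 32 * c * ∑ k, p.2 k * (J k).mulVec p.1 j := by
      rw [Finset.mul_sum]
      exact Finset.sum_congr rfl fun k _ => by ring
    rw [hsum, hw, sum_smul_mulVec]
    ring
  -- expand the sum of squares
  have hexp : gradSq J kN p
      = 16*c^2*S^2*(∑ j, (p.1 j)^2) + 128*c^2*S*(∑ j, p.1 j * w j) + 256*c^2*(∑ j, (w j)^2) := by
    unfold gradSq
    rw [Finset.sum_congr rfl (fun j _ => by rw [hX j])]
    have : ∀ j : Fin (2*n), (4 * c * (S * p.1 j + 4 * w j))^2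
        = 16*c^2*S^2*(p.1 j)^2 + 128*c^2*S*(p.1 j * w j) + 256*c^2*(w j)^2 := fun j => by ring
    rw [Finset.sum_congr rfl (fun j _ => this j)]
    rw [Finset.sum_add_distrib, Finset.sum_add_distrib, ← Finset.mul_sum, ← Finset.mul_sum,
      ← Finset.mul_sum]
  have hcross : ∑ j, p.1 j * w j = 0 := cross_zero J hskew p.2 p.1
  rw [hexp, hcross, ← hS]
  -- rewrite the right-hand side
  have he6 : e2norm p.1 ^ 6 = S^3 := by
    unfold e2norm
    rw [show (6:ℕ) = 2*3 from rfl, pow_mul, Real.sq_sqrt hSnn]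
  have he2 : e2norm w ^ 2 = ∑ j, (w j)^2 :=
    Real.sq_sqrt (Finset.sum_nonneg fun j _ => sq_nonneg _)
  have hE2 : E^2 = Rho p ^ (-(3:ℝ)/2) := by
    rw [hE, ← Real.rpow_natCast (Rho p ^ ((1:ℝ)/4 - 1)) 2, ← Real.rpow_mul hR.le]
    norm_num
  have hk6 : kN p ^ 6 = Rho p ^ ((3:ℝ)/2) := by
    rw [kN_eq, ← Real.rpow_natCast (Rho p ^ ((1:ℝ)/4)) 6, ← Real.rpow_mul hR.le]
    norm_num
  have hk6pos : 0 < Rho p ^ ((3:ℝ)/2) := Real.rpow_pos_of_pos hR _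
  have hinv : Rho p ^ (-(3:ℝ)/2) = (Rho p ^ ((3:ℝ)/2))⁻¹ := by
    rw [← Real.rpow_neg hR.le]
    norm_num
  rw [he6, he2, hk6]
  rw [eq_div_iff hk6pos.ne']
  have h16 : (16:ℝ) * c^2 = E^2 := by rw [hc]; ring
  have hEmul : E^2 * Rho p ^ ((3:ℝ)/2) = 1 := by
    rw [hE2, ← Real.rpow_add hR]
    norm_num
  have hmain : 16 * c ^ 2 * S ^ 2 * S + 128 * c ^ 2 * S * 0 + 256 * c ^ 2 * ∑ j, (w j) ^ 2
      = (S^3 + 16 * ∑ j, (w j)^2) * E^2 := by rw [← h16]; ring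
  rw [hmain, mul_assoc, hEmul, mul_one]

end
end

section
/- For every (x,t) ∈ G* the sub-Laplacian of the Kaplan norm satisfies L N(x,t) = (3/N(x,t)) |∇_H N(x,t)|² − (1/N(x,t)³) ( (2n+2)|x|² + 2 Σ_{k=1}^m |J_k x|² ). -/
open MeasureTheory Filter
open scoped BigOperators ENNReal NNReal

noncomputable section

namespace SubLapAux

/-- coordinate projections as continuous linear maps -/
def L1 (n m : ℕ) (i : Fin (2*n)) : GrpPt n m →L[ℝ] ℝ :=
  (ContinuousLinearMap.proj i).comp (ContinuousLinearMap.fst ℝ (Fin (2*n) → ℝ) (Fin m → ℝ))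
def L2 (n m : ℕ) (k : Fin m) : GrpPt n m →L[ℝ] ℝ :=
  (ContinuousLinearMap.proj k).comp (ContinuousLinearMap.snd ℝ (Fin (2*n) → ℝ) (Fin m → ℝ))

variable {n m : ℕ}

@[simp] lemma L1_apply (i) (v : GrpPt n m) : L1 n m i v = v.1 i := rfl
@[simp] lemma L2_apply (k) (v : GrpPt n m) : L2 n m k v = v.2 k := rfl

lemma hasL1 (i) (q : GrpPt n m) : HasFDerivAt (fun q : GrpPt n m => q.1 i) (L1 n m i) q :=
  (L1 n m i).hasFDerivAt
lemma hasL2 (k) (q : GrpPt n m) : HasFDerivAt (fun q : GrpPt n m => q.2 k) (L2 n m k) q :=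
  (L2 n m k).hasFDerivAt

def Ssum (q : GrpPt n m) : ℝ := ∑ i, q.1 i ^ 2
def Tsum (q : GrpPt n m) : ℝ := ∑ k, q.2 k ^ 2
def rho (q : GrpPt n m) : ℝ := Ssum q ^ 2 + 16 * Tsum q

def DS (q : GrpPt n m) : GrpPt n m →L[ℝ] ℝ := ∑ i, (2 * q.1 i) • L1 n m i
def DT (q : GrpPt n m) : GrpPt n m →L[ℝ] ℝ := ∑ k, (2 * q.2 k) • L2 n m k
def Drho (q : GrpPt n m) : GrpPt n m →L[ℝ] ℝ := (2 * Ssum q) • DS q + (16:ℝ) • DT q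

lemma hasS (q : GrpPt n m) : HasFDerivAt Ssum (DS q) q := by
  have h : HasFDerivAt (fun q : GrpPt n m => ∑ i, q.1 i * q.1 i)
      (∑ i, (q.1 i • L1 n m i + q.1 i • L1 n m i)) q :=
    HasFDerivAt.fun_sum fun i _ => (hasL1 i q).mul (hasL1 i q)
  have e1 : (Ssum : GrpPt n m → ℝ) = fun q : GrpPt n m => ∑ i, q.1 i * q.1 i := by
    funext q; simp [Ssum, sq]
  have e2 : DS q = ∑ i, (q.1 i • L1 n m i + q.1 i • L1 n m i) :=
    Finset.sum_congr rfl fun i _ => by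
      rw [show (2:ℝ) * q.1 i = q.1 i + q.1 i from two_mul _, add_smul]
  rw [e1, e2]; exact h

lemma hasT (q : GrpPt n m) : HasFDerivAt Tsum (DT q) q := by
  have h : HasFDerivAt (fun q : GrpPt n m => ∑ k, q.2 k * q.2 k)
      (∑ k, (q.2 k • L2 n m k + q.2 k • L2 n m k)) q :=
    HasFDerivAt.fun_sum fun k _ => (hasL2 k q).mul (hasL2 k q)
  have e1 : (Tsum : GrpPt n m → ℝ) = fun q : GrpPt n m => ∑ k, q.2 k * q.2 k := by
    funext q; simp [Tsum, sq]
  have e2 : DT q = ∑ k, (q.2 k • L2 n m k + q.2 k • L2 n m k) :=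
    Finset.sum_congr rfl fun k _ => by
      rw [show (2:ℝ) * q.2 k = q.2 k + q.2 k from two_mul _, add_smul]
  rw [e1, e2]; exact h

lemma hasRho (q : GrpPt n m) : HasFDerivAt rho (Drho q) q := by
  have h := ((hasS q).mul (hasS q)).add ((hasT q).const_mul (16:ℝ))
  have e1 : (rho : GrpPt n m → ℝ)
      = fun q : GrpPt n m => Ssum q * Ssum q + 16 * Tsum q := by
    funext q; simp [rho, sq]
  have e2 : Drho q = (Ssum q • DS q + Ssum q • DS q) + (16:ℝ) • DT q := by
    rw [Drho, show (2:ℝ) * Ssum q = Ssum q + Ssum q from two_mul _, add_smul]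
  rw [e1, e2]; exact h

lemma rho_pos (q : GrpPt n m) (hq : q ≠ 0) : 0 < rho q := by
  have hS0 : 0 ≤ Ssum q := Finset.sum_nonneg fun i _ => sq_nonneg _
  have hT0 : 0 ≤ Tsum q := Finset.sum_nonneg fun k _ => sq_nonneg _
  have h0 : (0:ℝ) ≤ rho q := by rw [rho]; positivity
  rcases lt_or_eq_of_le h0 with h | h
  · exact h
  exfalso; apply hq
  rw [rho] at h
  have h1 : Ssum q = 0 := by nlinarith [sq_nonneg (Ssum q)]
  have h2 : Tsum q = 0 := by nlinarith [sq_nonneg (Ssum q)]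
  rw [Ssum] at h1
  rw [Tsum] at h2
  have hx : q.1 = 0 := by
    funext i
    have := (Finset.sum_eq_zero_iff_of_nonneg (fun i _ => sq_nonneg (q.1 i))).mp h1 i
      (Finset.mem_univ i)
    simpa [pow_eq_zero_iff] using this
  have ht : q.2 = 0 := by
    funext k
    have := (Finset.sum_eq_zero_iff_of_nonneg (fun k _ => sq_nonneg (q.2 k))).mp h2 k
      (Finset.mem_univ k)
    simpa [pow_eq_zero_iff] using this
  exact Prod.ext hx ht

lemma kN_eq : (kN : GrpPt n m → ℝ) = fun q => rho q ^ ((1:ℝ)/4) := by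
  funext q
  have h1 : e2norm q.1 ^ 4 = Ssum q ^ 2 := by
    have h : e2norm q.1 ^ 2 = Ssum q := by
      rw [e2norm, Real.sq_sqrt (Finset.sum_nonneg fun i _ => sq_nonneg _)]; rfl
    calc e2norm q.1 ^ 4 = (e2norm q.1 ^ 2) ^ 2 := by ring
    _ = Ssum q ^ 2 := by rw [h]
  have h2 : e2norm q.2 ^ 2 = Tsum q := by
    rw [e2norm, Real.sq_sqrt (Finset.sum_nonneg fun k _ => sq_nonneg _)]; rfl
  rw [kN, h1, h2]; rfl

lemma e2norm_sq {k : ℕ} (v : Fin k → ℝ) : e2norm v ^ 2 = ∑ i, v i ^ 2 := by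
  rw [e2norm, Real.sq_sqrt (Finset.sum_nonneg fun i _ => sq_nonneg _)]

variable (J : Fin m → Matrix (Fin (2*n)) (Fin (2*n)) ℝ)

lemma mulVec_eq (k : Fin m) (q : GrpPt n m) (j : Fin (2*n)) :
    (J k).mulVec q.1 j = ∑ i, J k j i * q.1 i := rfl

def Aj (j : Fin (2*n)) (q : GrpPt n m) : ℝ :=
  4 * (Ssum q * q.1 j) + 16 * ∑ k, q.2 k * (J k).mulVec q.1 j

def DA (j : Fin (2*n)) (q : GrpPt n m) : GrpPt n m →L[ℝ] ℝ :=
  (4:ℝ) • (Ssum q • L1 n m j + q.1 j • DS q)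
    + (16:ℝ) • ∑ k, (q.2 k • (∑ i, J k j i • L1 n m i) + ((J k).mulVec q.1 j) • L2 n m k)

lemma hasA (j : Fin (2*n)) (q : GrpPt n m) : HasFDerivAt (Aj J j) (DA J j q) q := by
  have hMv : ∀ k, HasFDerivAt (fun q : GrpPt n m => (J k).mulVec q.1 j)
      (∑ i, J k j i • L1 n m i) q := by
    intro k
    have h : HasFDerivAt (fun q : GrpPt n m => ∑ i, J k j i * q.1 i)
        (∑ i, J k j i • L1 n m i) q :=
      HasFDerivAt.fun_sum fun i _ => (hasL1 i q).const_mul _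
    exact h
  exact (((hasS q).mul (hasL1 j q)).const_mul 4).add
    ((HasFDerivAt.fun_sum fun k _ => (hasL2 k q).mul (hMv k)).const_mul 16)

def gfun (j : Fin (2*n)) (q : GrpPt n m) : ℝ :=
  1/4 * rho q ^ ((1:ℝ)/4 - 1) * Aj J j q

def Dg (j : Fin (2*n)) (q : GrpPt n m) : GrpPt n m →L[ℝ] ℝ :=
  (1/4:ℝ) • (rho q ^ ((1:ℝ)/4 - 1) • DA J j q
    + Aj J j q • ((((1:ℝ)/4 - 1) * rho q ^ ((1:ℝ)/4 - 1 - 1)) • Drho q))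

lemma hasG (j : Fin (2*n)) (q : GrpPt n m) (hq : q ≠ 0) :
    HasFDerivAt (gfun J j) (Dg J j q) q := by
  have h := (((hasRho q).rpow_const (p := (1:ℝ)/4 - 1)
    (Or.inl (rho_pos q hq).ne')).mul (hasA J j q)).const_mul (1/4:ℝ)
  have e1 : (gfun J j : GrpPt n m → ℝ)
      = fun q => 1/4 * (rho q ^ ((1:ℝ)/4 - 1) * Aj J j q) := by
    funext q; rw [gfun, mul_assoc]
  rw [e1]; exact h

/- evaluations -/
lemma DS_x (q : GrpPt n m) (j : Fin (2*n)) :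
    DS q (Pi.single j 1, (0 : Fin m → ℝ)) = 2 * q.1 j := by
  simp [DS, Pi.single_apply, mul_ite, Finset.sum_ite_eq']
lemma DS_t (q : GrpPt n m) (k : Fin m) :
    DS q ((0 : Fin (2*n) → ℝ), Pi.single k 1) = 0 := by
  simp [DS]
lemma DT_x (q : GrpPt n m) (j : Fin (2*n)) :
    DT q (Pi.single j 1, (0 : Fin m → ℝ)) = 0 := by
  simp [DT]
lemma DT_t (q : GrpPt n m) (k : Fin m) :
    DT q ((0 : Fin (2*n) → ℝ), Pi.single k 1) = 2 * q.2 k := by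
  simp [DT, Pi.single_apply, mul_ite, Finset.sum_ite_eq']

lemma Drho_x (q : GrpPt n m) (j : Fin (2*n)) :
    Drho q (Pi.single j 1, (0 : Fin m → ℝ)) = 4 * (Ssum q * q.1 j) := by
  simp [Drho, DS_x, DT_x]; ring
lemma Drho_t (q : GrpPt n m) (k : Fin m) :
    Drho q ((0 : Fin (2*n) → ℝ), Pi.single k 1) = 32 * q.2 k := by
  simp [Drho, DS_t, DT_t]; ring

lemma DA_x (hskew : ∀ k, (J k).transpose = -(J k)) (j : Fin (2*n)) (q : GrpPt n m) :
    DA J j q (Pi.single j 1, (0 : Fin m → ℝ)) = 4 * Ssum q + 8 * q.1 j ^ 2 := by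
  have hdiag : ∀ k, J k j j = 0 := by
    intro k
    have := congrFun (congrFun (hskew k) j) j
    simp only [Matrix.transpose_apply, Matrix.neg_apply] at this
    linarith
  simp [DA, DS_x, Pi.single_apply, mul_ite, Finset.sum_ite_eq', hdiag]
  ring
lemma DA_t (j : Fin (2*n)) (q : GrpPt n m) (k0 : Fin m) :
    DA J j q ((0 : Fin (2*n) → ℝ), Pi.single k0 1) = 16 * (J k0).mulVec q.1 j := by
  simp [DA, DS_t, Pi.single_apply, mul_ite, Finset.sum_ite_eq']

lemma fderiv_kN (q : GrpPt n m) (hq : q ≠ 0) :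
    fderiv ℝ (kN : GrpPt n m → ℝ) q
      = (((1:ℝ)/4) * rho q ^ ((1:ℝ)/4 - 1)) • Drho q := by
  rw [kN_eq]
  exact ((hasRho q).rpow_const (Or.inl (rho_pos q hq).ne')).fderiv

lemma XD_kN (q : GrpPt n m) (hq : q ≠ 0) (j : Fin (2*n)) :
    XD J j kN q = 1/4 * rho q ^ ((1:ℝ)/4 - 1) * Aj J j q := by
  rw [XD, fderiv_kN q hq]
  simp only [ContinuousLinearMap.coe_smul', Pi.smul_apply, Drho_x, Drho_t, smul_eq_mul,
    Aj, mul_add, Finset.mul_sum, Finset.sum_mul]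
  ring_nf
  congr 1
  exact Finset.sum_congr rfl fun k _ => by ring

lemma XD_congr {f g : GrpPt n m → ℝ} {p : GrpPt n m} (j : Fin (2*n))
    (h : f =ᶠ[nhds p] g) : XD J j f p = XD J j g p := by
  rw [XD, XD, h.fderiv_eq]

lemma XD_g (hskew : ∀ k, (J k).transpose = -(J k)) (j : Fin (2*n)) (q : GrpPt n m)
    (hq : q ≠ 0) :
    XD J j (gfun J j) q
      = (2 * rho q ^ ((1:ℝ)/4 - 1)) * q.1 j ^ 2
        + rho q ^ ((1:ℝ)/4 - 1) * Ssum q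
        + (2 * rho q ^ ((1:ℝ)/4 - 1)) * ∑ k, ((J k).mulVec q.1 j) ^ 2
        + ((((1:ℝ)/4 - 1)/4) * rho q ^ ((1:ℝ)/4 - 1 - 1)) * (Aj J j q) ^ 2 := by
  rw [XD, (hasG J j q hq).fderiv]
  simp only [Dg, ContinuousLinearMap.coe_smul', Pi.smul_apply, ContinuousLinearMap.add_apply,
    ContinuousLinearMap.smul_apply, smul_eq_mul, DA_x J hskew, DA_t, Drho_x, Drho_t]
  have hAj : Aj J j q = 4 * (Ssum q * q.1 j) + 16 * ∑ k, q.2 k * (J k).mulVec q.1 j := rfl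
  have hsplit : ∑ k, (J k).mulVec q.1 j *
        (1/4 * (rho q ^ ((1:ℝ)/4 - 1) * (16 * (J k).mulVec q.1 j)
          + Aj J j q * (((1:ℝ)/4 - 1) * rho q ^ ((1:ℝ)/4 - 1 - 1) * (32 * q.2 k))))
      = 4 * rho q ^ ((1:ℝ)/4 - 1) * ∑ k, ((J k).mulVec q.1 j) ^ 2
        + 8 * (Aj J j q * (((1:ℝ)/4 - 1) * rho q ^ ((1:ℝ)/4 - 1 - 1)))
            * ∑ k, q.2 k * (J k).mulVec q.1 j := by
    rw [Finset.mul_sum, Finset.mul_sum, ← Finset.sum_add_distrib]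
    exact Finset.sum_congr rfl fun k _ => by ring
  rw [hsplit]
  linear_combination ((3:ℝ)/16 * rho q ^ ((1:ℝ)/4 - 1 - 1) * Aj J j q) * hAj

end SubLapAux

/-- Formula for the sub-Laplacian of the Kaplan norm on `G*`. -/
theorem subLaplacian_kaplan (n m : ℕ) (hn : 1 ≤ n) (hm : 1 ≤ m)
    (J : Fin m → Matrix (Fin (2*n)) (Fin (2*n)) ℝ)
    (hskew : ∀ k, (J k).transpose = -(J k))
    (hMet : ∀ t : Fin m → ℝ, t ≠ 0 → IsUnit (∑ k, t k • J k)) :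
    ∀ p : GrpPt n m, p ≠ 0 →
      LSub J kN p
        = (3 / kN p) * gradSq J kN p
          - (1 / kN p ^ 3) * ((2*(n:ℝ)+2) * e2norm p.1 ^ 2
              + 2 * ∑ k, e2norm ((J k).mulVec p.1) ^ 2) := by
  intro p hp
  have hr := SubLapAux.rho_pos p hp
  have hev : ∀ j, XD J j kN =ᶠ[nhds p] SubLapAux.gfun J j := by
    intro j
    filter_upwards [IsOpen.mem_nhds isOpen_compl_singleton (by simpa using hp)] with q hq
    exact SubLapAux.XD_kN J q (by simpa using hq) j
  have hXX : ∀ j, XD J j (XD J j kN) p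
      = (2 * SubLapAux.rho p ^ ((1:ℝ)/4 - 1)) * p.1 j ^ 2
        + SubLapAux.rho p ^ ((1:ℝ)/4 - 1) * SubLapAux.Ssum p
        + (2 * SubLapAux.rho p ^ ((1:ℝ)/4 - 1)) * ∑ k, ((J k).mulVec p.1 j) ^ 2
        + ((((1:ℝ)/4 - 1)/4) * SubLapAux.rho p ^ ((1:ℝ)/4 - 1 - 1))
            * (SubLapAux.Aj J j p) ^ 2 := by
    intro j
    rw [SubLapAux.XD_congr J j (hev j)]
    exact SubLapAux.XD_g J hskew j p hp
  have hXD1 : ∀ j, XD J j kN p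
      = 1/4 * SubLapAux.rho p ^ ((1:ℝ)/4 - 1) * SubLapAux.Aj J j p :=
    fun j => SubLapAux.XD_kN J p hp j
  have hkNp : kN p = SubLapAux.rho p ^ ((1:ℝ)/4) := congrFun SubLapAux.kN_eq p
  rw [LSub, gradSq]
  simp only [hXX, hXD1, mul_pow, hkNp, SubLapAux.e2norm_sq]
  rw [Finset.sum_comm (s := Finset.univ) (t := Finset.univ)
    (f := fun k j => ((J k).mulVec p.1 j) ^ 2)]
  simp only [Finset.sum_add_distrib, ← Finset.mul_sum, Finset.sum_const, Finset.card_univ,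
    Fintype.card_fin, nsmul_eq_mul, SubLapAux.Ssum]
  have he : SubLapAux.rho p ^ ((1:ℝ)/4 - 1)
      = SubLapAux.rho p ^ ((1:ℝ)/4) / SubLapAux.rho p := by
    rw [Real.rpow_sub hr, Real.rpow_one]
  have he1 : SubLapAux.rho p ^ ((1:ℝ)/4 - 1 - 1)
      = SubLapAux.rho p ^ ((1:ℝ)/4) / SubLapAux.rho p / SubLapAux.rho p := by
    rw [Real.rpow_sub hr, he, Real.rpow_one]
  rw [he, he1]
  set u := SubLapAux.rho p ^ ((1:ℝ)/4) with hu_def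
  have hu : 0 < u := Real.rpow_pos_of_pos hr _
  have hru : u ^ 4 = SubLapAux.rho p := by
    rw [hu_def, ← Real.rpow_natCast (SubLapAux.rho p ^ ((1:ℝ)/4)) 4,
      ← Real.rpow_mul hr.le]
    norm_num
  rw [← hru]
  push_cast
  field_simp
  ring

end
end

section
/- There exist constants c and C with 0 < c ≤ 1 ≤ C (one may take c = min(c₀,1) and C = max(C₀,1), where c₀ and C₀ are the minimum and maximum of |J_t x|² over {|x| = |t| = 1}) such that for every (x,t) ∈ G*: c |x|² / N(x,t)² ≤ |∇_H N(x,t)|² ≤ C |x|² / N(x,t)². -/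
open MeasureTheory Filter
open scoped BigOperators ENNReal NNReal

noncomputable section

namespace KapAux

def sq2 {k : ℕ} (x : Fin k → ℝ) : ℝ := ∑ i, (x i)^2

lemma sq2_nonneg {k : ℕ} (x : Fin k → ℝ) : 0 ≤ sq2 x :=
  Finset.sum_nonneg fun _ _ => sq_nonneg _

lemma sq2_eq_zero_iff {k : ℕ} (x : Fin k → ℝ) : sq2 x = 0 ↔ x = 0 := by
  constructor
  · intro h
    funext i
    have := (Finset.sum_eq_zero_iff_of_nonneg (fun i _ => sq_nonneg (x i))).1 h i (Finset.mem_univ i)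
    exact pow_eq_zero_iff (two_ne_zero) |>.1 this
  · rintro rfl; simp [sq2]

lemma e2norm_sq {k : ℕ} (x : Fin k → ℝ) : e2norm x ^ 2 = sq2 x :=
  Real.sq_sqrt (sq2_nonneg x)

lemma e2norm_pow4 {k : ℕ} (x : Fin k → ℝ) : e2norm x ^ 4 = (sq2 x)^2 := by
  rw [show (4:ℕ) = 2*2 from rfl, pow_mul, e2norm_sq]

def rho {n m : ℕ} (p : GrpPt n m) : ℝ := (sq2 p.1)^2 + 16 * sq2 p.2

lemma rho_nonneg {n m : ℕ} (p : GrpPt n m) : 0 ≤ rho p := by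
  have := sq2_nonneg p.2
  have := sq_nonneg (sq2 p.1)
  unfold rho; linarith

lemma rho_pos {n m : ℕ} {p : GrpPt n m} (hp : p ≠ 0) : 0 < rho p := by
  rcases (rho_nonneg p).lt_or_eq with h | h
  · exact h
  · exfalso
    have h2 : 0 ≤ (sq2 p.1)^2 := sq_nonneg _
    have h3 : 0 ≤ sq2 p.2 := sq2_nonneg p.2
    have hρ : (sq2 p.1)^2 + 16 * sq2 p.2 = 0 := h.symm
    apply hp
    have hx : p.1 = 0 := (sq2_eq_zero_iff _).1 (by nlinarith)
    have ht : p.2 = 0 := (sq2_eq_zero_iff _).1 (by nlinarith)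
    exact Prod.ext hx ht

lemma kN_eq {n m : ℕ} (p : GrpPt n m) : kN p = rho p ^ ((1:ℝ)/4) := by
  unfold kN rho
  rw [e2norm_pow4, e2norm_sq]

def Dsq2 {k : ℕ} (x : Fin k → ℝ) : (Fin k → ℝ) →L[ℝ] ℝ :=
  ∑ i, (2 * x i) • ContinuousLinearMap.proj i

lemma hasFDerivAt_sq2 {k : ℕ} (x : Fin k → ℝ) : HasFDerivAt sq2 (Dsq2 x) x := by
  have : HasFDerivAt (fun x : Fin k → ℝ => ∑ i, (x i)^2) (Dsq2 x) x := by
    apply HasFDerivAt.fun_sum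
    intro i _
    have h1 : HasFDerivAt (fun x : Fin k → ℝ => x i)
        (ContinuousLinearMap.proj (R := ℝ) (φ := fun _ : Fin k => ℝ) i) x :=
      (ContinuousLinearMap.proj (R := ℝ) (φ := fun _ : Fin k => ℝ) i).hasFDerivAt
    have h2 := h1.mul h1
    have h3 : HasFDerivAt (fun x : Fin k → ℝ => (x i)^2)
        ((2 * x i) • ContinuousLinearMap.proj (R := ℝ) (φ := fun _ : Fin k => ℝ) i) x := by
      have heq : (fun x : Fin k → ℝ => (x i)^2) = fun y => y i * y i := by
        funext y; ring
      rw [heq, show (2 * x i) • ContinuousLinearMap.proj (R := ℝ) (φ := fun _ : Fin k => ℝ) i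
          = x i • ContinuousLinearMap.proj i + x i • ContinuousLinearMap.proj i by
        rw [two_mul (x i), add_smul]]
      exact h2
    exact h3
  exact this

lemma Dsq2_apply {k : ℕ} (x v : Fin k → ℝ) : Dsq2 x v = ∑ i, 2 * x i * v i := by
  simp [Dsq2, ContinuousLinearMap.sum_apply, smul_eq_mul]

lemma Dsq2_single {k : ℕ} (x : Fin k → ℝ) (j : Fin k) : Dsq2 x (Pi.single j 1) = 2 * x j := by
  rw [Dsq2_apply]
  rw [Finset.sum_eq_single j]
  · simp
  · intro i _ hij; simp [Pi.single_apply, hij]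
  · simp

def Drho {n m : ℕ} (p : GrpPt n m) : GrpPt n m →L[ℝ] ℝ :=
  (2 * sq2 p.1) • ((Dsq2 p.1).comp (ContinuousLinearMap.fst ℝ _ _))
  + (16:ℝ) • ((Dsq2 p.2).comp (ContinuousLinearMap.snd ℝ _ _))

lemma hasFDerivAt_rho {n m : ℕ} (p : GrpPt n m) : HasFDerivAt rho (Drho p) p := by
  have hfst : HasFDerivAt (fun q : GrpPt n m => sq2 q.1)
      ((Dsq2 p.1).comp (ContinuousLinearMap.fst ℝ _ _)) p :=
    (hasFDerivAt_sq2 p.1).comp p hasFDerivAt_fst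
  have hsnd : HasFDerivAt (fun q : GrpPt n m => sq2 q.2)
      ((Dsq2 p.2).comp (ContinuousLinearMap.snd ℝ _ _)) p :=
    (hasFDerivAt_sq2 p.2).comp p hasFDerivAt_snd
  have h1 : HasFDerivAt (fun q : GrpPt n m => (sq2 q.1)^2)
      ((2 * sq2 p.1) • ((Dsq2 p.1).comp (ContinuousLinearMap.fst ℝ _ _))) p := by
    have heq : (fun q : GrpPt n m => (sq2 q.1)^2) = fun q => sq2 q.1 * sq2 q.1 := by
      funext q; ring
    rw [heq, show (2 * sq2 p.1) • ((Dsq2 p.1).comp (ContinuousLinearMap.fst ℝ (Fin (2*n) → ℝ) (Fin m → ℝ)))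
        = sq2 p.1 • ((Dsq2 p.1).comp (ContinuousLinearMap.fst ℝ _ _))
          + sq2 p.1 • ((Dsq2 p.1).comp (ContinuousLinearMap.fst ℝ _ _)) by
      rw [two_mul (sq2 p.1), add_smul]]
    exact hfst.mul hfst
  have h2 := (hsnd.const_mul (16:ℝ))
  exact h1.add h2

lemma hasFDerivAt_kN {n m : ℕ} {p : GrpPt n m} (hp : p ≠ 0) :
    HasFDerivAt kN ((((1:ℝ)/4) * rho p ^ ((1:ℝ)/4 - 1)) • Drho p) p := by
  have h := (hasFDerivAt_rho p).rpow_const (p := (1:ℝ)/4) (Or.inl (rho_pos hp).ne')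
  have : kN = fun q : GrpPt n m => rho q ^ ((1:ℝ)/4) := funext kN_eq
  rw [this]
  exact h

lemma fderiv_kN_fst {n m : ℕ} {p : GrpPt n m} (hp : p ≠ 0) (j : Fin (2*n)) :
    fderiv ℝ kN p ((Pi.single j 1 : Fin (2*n) → ℝ), (0 : Fin m → ℝ))
      = rho p ^ (-(3:ℝ)/4) * (sq2 p.1 * p.1 j) := by
  rw [(hasFDerivAt_kN hp).fderiv]
  simp only [ContinuousLinearMap.smul_apply, Drho, ContinuousLinearMap.add_apply,
    ContinuousLinearMap.coe_comp', Function.comp_apply, ContinuousLinearMap.coe_fst',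
    ContinuousLinearMap.coe_snd', ContinuousLinearMap.smul_apply, smul_eq_mul]
  rw [Dsq2_single]
  rw [show Dsq2 p.2 (0 : Fin m → ℝ) = 0 by simp [Dsq2_apply]]
  rw [show ((1:ℝ)/4 - 1) = -(3:ℝ)/4 by norm_num]
  ring

lemma fderiv_kN_snd {n m : ℕ} {p : GrpPt n m} (hp : p ≠ 0) (k : Fin m) :
    fderiv ℝ kN p ((0 : Fin (2*n) → ℝ), (Pi.single k 1 : Fin m → ℝ))
      = rho p ^ (-(3:ℝ)/4) * (8 * p.2 k) := by
  rw [(hasFDerivAt_kN hp).fderiv]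
  simp only [ContinuousLinearMap.smul_apply, Drho, ContinuousLinearMap.add_apply,
    ContinuousLinearMap.coe_comp', Function.comp_apply, ContinuousLinearMap.coe_fst',
    ContinuousLinearMap.coe_snd', ContinuousLinearMap.smul_apply, smul_eq_mul]
  rw [Dsq2_single]
  rw [show Dsq2 p.1 (0 : Fin (2*n) → ℝ) = 0 by simp [Dsq2_apply]]
  rw [show ((1:ℝ)/4 - 1) = -(3:ℝ)/4 by norm_num]
  ring

lemma XD_kN {n m : ℕ} (J : Fin m → Matrix (Fin (2*n)) (Fin (2*n)) ℝ)
    {p : GrpPt n m} (hp : p ≠ 0) (j : Fin (2*n)) :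
    XD J j kN p = rho p ^ (-(3:ℝ)/4)
      * (sq2 p.1 * p.1 j + 4 * ∑ k, p.2 k * (J k).mulVec p.1 j) := by
  unfold XD
  rw [fderiv_kN_fst hp j]
  have hterm : ∀ k : Fin m, ((J k).mulVec p.1 j) • fderiv ℝ kN p ((0 : Fin (2*n) → ℝ), Pi.single k 1)
      = (8 * rho p ^ (-(3:ℝ)/4)) * (p.2 k * (J k).mulVec p.1 j) := by
    intro k
    rw [fderiv_kN_snd hp k, smul_eq_mul]
    ring
  rw [Finset.sum_congr rfl (fun k _ => hterm k), ← Finset.mul_sum, smul_eq_mul]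
  ring

lemma skew_inner {d : ℕ} (A : Matrix (Fin d) (Fin d) ℝ) (hA : A.transpose = -A)
    (x : Fin d → ℝ) : ∑ j, x j * A.mulVec x j = 0 := by
  have hA' : ∀ i j, A j i = -A i j := by
    intro i j
    have := congrFun (congrFun hA i) j
    simpa [Matrix.transpose_apply, Matrix.neg_apply] using this
  have hexp : ∑ j, x j * A.mulVec x j = ∑ j, ∑ i, x j * (A j i * x i) := by
    simp [Matrix.mulVec, dotProduct, Finset.mul_sum]
  have hneg : (∑ j, ∑ i, x j * (A j i * x i)) = -∑ j, ∑ i, x j * (A j i * x i) := by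
    conv_lhs => rw [Finset.sum_comm]
    rw [← Finset.sum_neg_distrib]
    apply Finset.sum_congr rfl
    intro i _
    rw [← Finset.sum_neg_distrib]
    apply Finset.sum_congr rfl
    intro j _
    rw [hA' j i]
    ring
  rw [hexp]
  linarith [hneg]

lemma kN_sq {n m : ℕ} (p : GrpPt n m) : kN p ^ 2 = rho p ^ ((1:ℝ)/2) := by
  rw [kN_eq, ← Real.rpow_natCast (rho p ^ ((1:ℝ)/4)) 2, ← Real.rpow_mul (rho_nonneg p)]
  norm_num

lemma gradSq_kN {n m : ℕ} (J : Fin m → Matrix (Fin (2*n)) (Fin (2*n)) ℝ)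
    (hskew : ∀ k, (J k).transpose = -(J k)) {p : GrpPt n m} (hp : p ≠ 0) :
    gradSq J kN p
      = (sq2 p.1 ^ 3 + 16 * ∑ j, (∑ k, p.2 k * (J k).mulVec p.1 j)^2) / (rho p * kN p ^ 2) := by
  have hρ : 0 < rho p := rho_pos hp
  unfold gradSq
  have h1 : ∀ j, (XD J j kN p)^2 = (rho p ^ (-(3:ℝ)/4))^2
      * (sq2 p.1 * p.1 j + 4 * ∑ k, p.2 k * (J k).mulVec p.1 j)^2 := by
    intro j; rw [XD_kN J hp j]; ring
  rw [Finset.sum_congr rfl (fun j _ => h1 j), ← Finset.mul_sum]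
  have hcross : ∑ j, p.1 j * (∑ k, p.2 k * (J k).mulVec p.1 j) = 0 := by
    have : ∀ j, p.1 j * (∑ k, p.2 k * (J k).mulVec p.1 j)
        = ∑ k, p.2 k * (p.1 j * (J k).mulVec p.1 j) := by
      intro j; rw [Finset.mul_sum]; exact Finset.sum_congr rfl fun k _ => by ring
    rw [Finset.sum_congr rfl (fun j _ => this j), Finset.sum_comm]
    apply Finset.sum_eq_zero
    intro k _
    rw [← Finset.mul_sum, skew_inner (J k) (hskew k) p.1, mul_zero]
  have hexpand : ∑ j, (sq2 p.1 * p.1 j + 4 * ∑ k, p.2 k * (J k).mulVec p.1 j)^2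
      = sq2 p.1 ^ 3 + 16 * ∑ j, (∑ k, p.2 k * (J k).mulVec p.1 j)^2 := by
    have : ∀ j, (sq2 p.1 * p.1 j + 4 * ∑ k, p.2 k * (J k).mulVec p.1 j)^2
        = sq2 p.1 ^2 * (p.1 j)^2
          + (8 * sq2 p.1) * (p.1 j * (∑ k, p.2 k * (J k).mulVec p.1 j))
          + 16 * (∑ k, p.2 k * (J k).mulVec p.1 j)^2 := by
      intro j; ring
    rw [Finset.sum_congr rfl (fun j _ => this j), Finset.sum_add_distrib,
      Finset.sum_add_distrib, ← Finset.mul_sum, ← Finset.mul_sum, ← Finset.mul_sum, hcross]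
    have : sq2 p.1 ^2 * (∑ j, (p.1 j)^2) = sq2 p.1 ^3 := by rw [show (∑ j, (p.1 j)^2) = sq2 p.1 from rfl]; ring
    rw [this]; ring
  rw [hexpand, kN_sq]
  have hsq : (rho p ^ (-(3:ℝ)/4))^2 = (rho p * rho p ^ ((1:ℝ)/2))⁻¹ := by
    rw [← Real.rpow_natCast (rho p ^ (-(3:ℝ)/4)) 2, ← Real.rpow_mul (rho_nonneg p)]
    have h32 : rho p * rho p ^ ((1:ℝ)/2) = rho p ^ ((3:ℝ)/2) := by
      rw [show (3:ℝ)/2 = 1 + 1/2 by norm_num, Real.rpow_add hρ, Real.rpow_one]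
    rw [h32, show (-(3:ℝ)/4 * (2:ℕ)) = -((3:ℝ)/2) by push_cast; ring,
      Real.rpow_neg (rho_nonneg p)]
  rw [hsq, inv_mul_eq_div]

lemma sq2_pos {k : ℕ} {x : Fin k → ℝ} (hx : x ≠ 0) : 0 < sq2 x :=
  lt_of_le_of_ne (sq2_nonneg x) (fun h => hx ((sq2_eq_zero_iff x).1 h.symm))

lemma sq2_smul {k : ℕ} (c : ℝ) (x : Fin k → ℝ) : sq2 (c • x) = c^2 * sq2 x := by
  simp [sq2, Pi.smul_apply, smul_eq_mul, mul_pow, Finset.mul_sum]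

lemma sq2_single {k : ℕ} (j : Fin k) : sq2 (Pi.single j (1:ℝ)) = 1 := by
  simp [sq2, Pi.single_apply, ite_pow]

lemma continuous_sq2 {k : ℕ} : Continuous (sq2 (k := k)) := by
  unfold sq2
  exact continuous_finset_sum _ fun i _ => (continuous_apply i).pow 2

def Qf {n m : ℕ} (J : Fin m → Matrix (Fin (2*n)) (Fin (2*n)) ℝ)
    (q : (Fin (2*n) → ℝ) × (Fin m → ℝ)) : ℝ :=
  ∑ j, (∑ k, q.2 k * (J k).mulVec q.1 j)^2

lemma continuous_Qf {n m : ℕ} (J : Fin m → Matrix (Fin (2*n)) (Fin (2*n)) ℝ) :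
    Continuous (Qf J) := by
  unfold Qf
  apply continuous_finset_sum
  intro j _
  apply Continuous.pow
  apply continuous_finset_sum
  intro k _
  apply Continuous.mul ((continuous_apply k).comp continuous_snd)
  show Continuous fun q : (Fin (2*n) → ℝ) × (Fin m → ℝ) => (J k).mulVec q.1 j
  simp only [Matrix.mulVec, dotProduct]
  exact continuous_finset_sum _ fun i _ =>
    continuous_const.mul ((continuous_apply i).comp continuous_fst)

lemma Qf_smul {n m : ℕ} (J : Fin m → Matrix (Fin (2*n)) (Fin (2*n)) ℝ)
    (a b : ℝ) (x : Fin (2*n) → ℝ) (t : Fin m → ℝ) :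
    Qf J (a • x, b • t) = a^2 * b^2 * Qf J (x, t) := by
  unfold Qf
  rw [Finset.mul_sum]
  apply Finset.sum_congr rfl
  intro j _
  have hin : ∑ k, (b • t) k * (J k).mulVec (a • x) j
      = (a * b) * ∑ k, t k * (J k).mulVec x j := by
    rw [Finset.mul_sum]
    apply Finset.sum_congr rfl
    intro k _
    rw [Matrix.mulVec_smul]
    simp only [Pi.smul_apply, smul_eq_mul]
    ring
  rw [hin]
  ring

lemma Qf_sum_mulVec {n m : ℕ} (J : Fin m → Matrix (Fin (2*n)) (Fin (2*n)) ℝ)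
    (x : Fin (2*n) → ℝ) (t : Fin m → ℝ) :
    Qf J (x, t) = sq2 ((∑ k, t k • J k).mulVec x) := by
  unfold Qf sq2
  apply Finset.sum_congr rfl
  intro j _
  congr 1
  show ∑ k, t k * (J k).mulVec x j = (∑ k, t k • J k).mulVec x j
  simp only [Matrix.mulVec, dotProduct, Matrix.sum_apply, Matrix.smul_apply,
    smul_eq_mul, Finset.sum_mul, Finset.mul_sum]
  rw [Finset.sum_comm]
  apply Finset.sum_congr rfl
  intro i _
  apply Finset.sum_congr rfl
  intro k _
  ring

lemma Qf_bounds {n m : ℕ} (hn : 1 ≤ n) (hm : 1 ≤ m)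
    (J : Fin m → Matrix (Fin (2*n)) (Fin (2*n)) ℝ)
    (hMet : ∀ t : Fin m → ℝ, t ≠ 0 → IsUnit (∑ k, t k • J k)) :
    ∃ c₀ C₀ : ℝ, 0 < c₀ ∧ ∀ (x : Fin (2*n) → ℝ) (t : Fin m → ℝ),
      c₀ * (sq2 x * sq2 t) ≤ Qf J (x, t) ∧ Qf J (x, t) ≤ C₀ * (sq2 x * sq2 t) := by
  classical
  set K : Set ((Fin (2*n) → ℝ) × (Fin m → ℝ)) := {q | sq2 q.1 = 1 ∧ sq2 q.2 = 1} with hK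
  have hclosed : IsClosed K := by
    apply IsClosed.inter
    · exact isClosed_eq (continuous_sq2.comp continuous_fst) continuous_const
    · exact isClosed_eq (continuous_sq2.comp continuous_snd) continuous_const
  have hsub : K ⊆ Metric.closedBall 0 1 := by
    rintro q ⟨h1, h2⟩
    rw [Metric.mem_closedBall, dist_zero_right, Prod.norm_def, max_le_iff]
    constructor
    · rw [pi_norm_le_iff_of_nonneg zero_le_one]
      intro i
      have hle : (q.1 i)^2 ≤ 1 := by
        rw [← h1]
        exact Finset.single_le_sum (f := fun i => (q.1 i)^2) (fun i _ => sq_nonneg _)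
          (Finset.mem_univ i)
      rw [Real.norm_eq_abs]
      nlinarith [sq_abs (q.1 i), abs_nonneg (q.1 i)]
    · rw [pi_norm_le_iff_of_nonneg zero_le_one]
      intro i
      have hle : (q.2 i)^2 ≤ 1 := by
        rw [← h2]
        exact Finset.single_le_sum (f := fun i => (q.2 i)^2) (fun i _ => sq_nonneg _)
          (Finset.mem_univ i)
      rw [Real.norm_eq_abs]
      nlinarith [sq_abs (q.2 i), abs_nonneg (q.2 i)]
  have hcpt : IsCompact K :=
    (isCompact_closedBall (0 : (Fin (2*n) → ℝ) × (Fin m → ℝ)) 1).of_isClosed_subset hclosed hsub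
  have hne : K.Nonempty := by
    refine ⟨(Pi.single (⟨0, by omega⟩ : Fin (2*n)) 1, Pi.single (⟨0, by omega⟩ : Fin m) 1), ?_, ?_⟩
    · exact sq2_single _
    · exact sq2_single _
  obtain ⟨qa, hqaK, hqa⟩ := hcpt.exists_isMinOn hne (continuous_Qf J).continuousOn
  obtain ⟨qb, hqbK, hqb⟩ := hcpt.exists_isMaxOn hne (continuous_Qf J).continuousOn
  refine ⟨Qf J qa, Qf J qb, ?_, ?_⟩
  · -- positivity of the minimum
    have ht : qa.2 ≠ 0 := by
      intro h
      have := hqaK.2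
      rw [h] at this
      simp [sq2] at this
    have hx : qa.1 ≠ 0 := by
      intro h
      have := hqaK.1
      rw [h] at this
      simp [sq2] at this
    have hu : IsUnit (∑ k, qa.2 k • J k) := hMet qa.2 ht
    have hinj : Function.Injective (∑ k, qa.2 k • J k).mulVec :=
      Matrix.mulVec_injective_iff_isUnit.2 hu
    have hv : (∑ k, qa.2 k • J k).mulVec qa.1 ≠ 0 := by
      intro h
      apply hx
      apply hinj
      rw [h, Matrix.mulVec_zero]
    rw [show qa = (qa.1, qa.2) from rfl, Qf_sum_mulVec]
    exact sq2_pos hv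
  · intro x t
    by_cases hx : x = 0
    · subst hx
      have : Qf J (0, t) = 0 := by simp [Qf, Matrix.mulVec_zero]
      rw [this]
      have h0 : sq2 (0 : Fin (2*n) → ℝ) = 0 := by simp [sq2]
      rw [h0]
      constructor <;> simp
    by_cases ht : t = 0
    · subst ht
      have : Qf J (x, 0) = 0 := by simp [Qf]
      rw [this]
      have h0 : sq2 (0 : Fin m → ℝ) = 0 := by simp [sq2]
      rw [h0]
      constructor <;> simp
    · have hS : 0 < sq2 x := sq2_pos hx
      have hT : 0 < sq2 t := sq2_pos ht
      set a := Real.sqrt (sq2 x) with ha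
      set b := Real.sqrt (sq2 t) with hb
      have hapos : 0 < a := Real.sqrt_pos.2 hS
      have hbpos : 0 < b := Real.sqrt_pos.2 hT
      have ha2 : a^2 = sq2 x := Real.sq_sqrt hS.le
      have hb2 : b^2 = sq2 t := Real.sq_sqrt hT.le
      set x' := a⁻¹ • x with hx'
      set t' := b⁻¹ • t with ht'
      have hx'1 : sq2 x' = 1 := by
        rw [hx', sq2_smul, ← ha2]
        field_simp
      have ht'1 : sq2 t' = 1 := by
        rw [ht', sq2_smul, ← hb2]
        field_simp
      have hmem : (x', t') ∈ K := ⟨hx'1, ht'1⟩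
      have hxx : a • x' = x := by
        rw [hx', smul_smul, mul_inv_cancel₀ hapos.ne', one_smul]
      have htt : b • t' = t := by
        rw [ht', smul_smul, mul_inv_cancel₀ hbpos.ne', one_smul]
      have hQ : Qf J (x, t) = sq2 x * sq2 t * Qf J (x', t') := by
        conv_lhs => rw [← hxx, ← htt]
        rw [Qf_smul, ha2, hb2]
      have hST : 0 ≤ sq2 x * sq2 t := by positivity
      constructor
      · rw [hQ]
        have := hqa hmem
        calc Qf J qa * (sq2 x * sq2 t) ≤ Qf J (x', t') * (sq2 x * sq2 t) :=
              mul_le_mul_of_nonneg_right this hST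
          _ = sq2 x * sq2 t * Qf J (x', t') := by ring
      · rw [hQ]
        have := hqb hmem
        calc sq2 x * sq2 t * Qf J (x', t') = Qf J (x', t') * (sq2 x * sq2 t) := by ring
          _ ≤ Qf J qb * (sq2 x * sq2 t) := mul_le_mul_of_nonneg_right this hST

end KapAux

/-- Two-sided bound for the squared horizontal gradient of the Kaplan norm on `G*`. -/
theorem gradSq_kaplan_bounds (n m : ℕ) (hn : 1 ≤ n) (hm : 1 ≤ m)
    (J : Fin m → Matrix (Fin (2*n)) (Fin (2*n)) ℝ)
    (hskew : ∀ k, (J k).transpose = -(J k))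
    (hMet : ∀ t : Fin m → ℝ, t ≠ 0 → IsUnit (∑ k, t k • J k)) :
    ∃ c C : ℝ, 0 < c ∧ c ≤ 1 ∧ 1 ≤ C ∧ ∀ p : GrpPt n m, p ≠ 0 →
      c * e2norm p.1 ^ 2 / kN p ^ 2 ≤ gradSq J kN p ∧
      gradSq J kN p ≤ C * e2norm p.1 ^ 2 / kN p ^ 2 := by
  obtain ⟨c₀, C₀, hc₀, hbnd⟩ := KapAux.Qf_bounds hn hm J hMet
  refine ⟨min c₀ 1, max C₀ 1, lt_min hc₀ one_pos, min_le_right _ _, le_max_right _ _, ?_⟩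
  intro p hp
  have hS : 0 ≤ KapAux.sq2 p.1 := KapAux.sq2_nonneg p.1
  have hT : 0 ≤ KapAux.sq2 p.2 := KapAux.sq2_nonneg p.2
  have hρ : 0 < KapAux.rho p := KapAux.rho_pos hp
  have hk2 : 0 < kN p ^ 2 := by
    rw [KapAux.kN_sq]
    exact Real.rpow_pos_of_pos hρ _
  have hQ := hbnd p.1 p.2
  have hgrad : gradSq J kN p
      = (KapAux.sq2 p.1 ^ 3 + 16 * KapAux.Qf J (p.1, p.2)) / (KapAux.rho p * kN p ^ 2) :=
    KapAux.gradSq_kN J hskew hp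
  have hρ_eq : KapAux.rho p = KapAux.sq2 p.1 ^ 2 + 16 * KapAux.sq2 p.2 := rfl
  have he2 : e2norm p.1 ^ 2 = KapAux.sq2 p.1 := KapAux.e2norm_sq p.1
  set S := KapAux.sq2 p.1 with hSdef
  set T := KapAux.sq2 p.2 with hTdef
  set Qp := KapAux.Qf J (p.1, p.2) with hQdef
  have hmin1 : min c₀ 1 ≤ 1 := min_le_right _ _
  have hminc : min c₀ 1 ≤ c₀ := min_le_left _ _
  have hmax1 : (1:ℝ) ≤ max C₀ 1 := le_max_right _ _
  have hmaxC : C₀ ≤ max C₀ 1 := le_max_left _ _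
  constructor
  · rw [hgrad, he2, div_le_div_iff₀ hk2 (mul_pos hρ hk2)]
    have key : min c₀ 1 * S * KapAux.rho p ≤ S^3 + 16*Qp := by
      rw [hρ_eq]
      nlinarith [hQ.1, mul_nonneg (sub_nonneg.2 hmin1) (pow_nonneg hS 3),
        mul_nonneg (sub_nonneg.2 hminc) (mul_nonneg hS hT)]
    have h2 := mul_le_mul_of_nonneg_right key hk2.le
    nlinarith [h2]
  · rw [hgrad, he2, div_le_div_iff₀ (mul_pos hρ hk2) hk2]
    have key : S^3 + 16*Qp ≤ max C₀ 1 * S * KapAux.rho p := by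
      rw [hρ_eq]
      nlinarith [hQ.2, mul_nonneg (sub_nonneg.2 hmax1) (pow_nonneg hS 3), mul_nonneg (sub_nonneg.2 hmaxC) (mul_nonneg hS hT)]
    have h2 := mul_le_mul_of_nonneg_right key hk2.le
    nlinarith [h2]


end
end

section
/- For every α > 0 there exist constants c₁, c₂, c₃ > 0 and c₄ ∈ ℝ (depending on α, n, m and the matrices J_k) such that for every (x,t) ∈ G*: N(x,t)^{2α−4} |x|² ( c₁ − c₂ / N(x,t)^α ) ≤ V_α(x,t) ≤ N(x,t)^{2α−4} |x|² ( c₃ − c₄ / N(x,t)^α ). -/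
open MeasureTheory Filter
open scoped BigOperators ENNReal NNReal

noncomputable section

namespace MetAux
variable {n m : ℕ}

def S1 (p : GrpPt n m) : ℝ := ∑ i, (p.1 i)^2
def S2 (p : GrpPt n m) : ℝ := ∑ k, (p.2 k)^2
def Qf (p : GrpPt n m) : ℝ := S1 p ^ 2 + 16 * S2 p

lemma S1_nonneg (p : GrpPt n m) : 0 ≤ S1 p := Finset.sum_nonneg fun _ _ => sq_nonneg _
lemma S2_nonneg (p : GrpPt n m) : 0 ≤ S2 p := Finset.sum_nonneg fun _ _ => sq_nonneg _
lemma Qf_nonneg (p : GrpPt n m) : 0 ≤ Qf p := by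
  have := S2_nonneg p; have := sq_nonneg (S1 p); unfold Qf; nlinarith

lemma Qf_pos {p : GrpPt n m} (hp : p ≠ 0) : 0 < Qf p := by
  rcases (Qf_nonneg p).lt_or_eq with h | h
  · exact h
  · exfalso; apply hp
    have h1 : S1 p = 0 := by
      have := S2_nonneg p; have := sq_nonneg (S1 p); have := S1_nonneg p
      unfold Qf at h; nlinarith
    have h2 : S2 p = 0 := by
      have := sq_nonneg (S1 p); unfold Qf at h; nlinarith [S2_nonneg p]
    have hx : p.1 = 0 := by
      funext i
      have h3 := (Finset.sum_eq_zero_iff_of_nonneg (fun i (_ : i ∈ Finset.univ) => sq_nonneg (p.1 i))).mp h1 i (Finset.mem_univ i)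
      simpa using pow_eq_zero_iff (n := 2) (by norm_num) |>.mp h3
    have ht : p.2 = 0 := by
      funext k
      have h3 := (Finset.sum_eq_zero_iff_of_nonneg (fun k (_ : k ∈ Finset.univ) => sq_nonneg (p.2 k))).mp h2 k (Finset.mem_univ k)
      simpa using pow_eq_zero_iff (n := 2) (by norm_num) |>.mp h3
    exact Prod.ext hx ht

lemma kN_eq (p : GrpPt n m) : kN p = Qf p ^ ((1:ℝ)/4) := by
  have h1 : e2norm p.1 ^ 4 = S1 p ^ 2 := by
    have : Real.sqrt (∑ i, (p.1 i)^2) ^ 2 = ∑ i, (p.1 i)^2 := Real.sq_sqrt (by positivity)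
    rw [e2norm, show (4:ℕ) = 2*2 from rfl, pow_mul, this]; rfl
  have h2 : e2norm p.2 ^ 2 = S2 p := Real.sq_sqrt (by positivity)
  rw [kN, h1, h2, Qf]

lemma kN_pow (α : ℝ) (p : GrpPt n m) : kN p ^ α = Qf p ^ (α/4) := by
  rw [kN_eq, ← Real.rpow_mul (Qf_nonneg p)]
  congr 1; ring

/-- the horizontal direction vector -/
def vj (J : Fin m → Matrix (Fin (2*n)) (Fin (2*n)) ℝ) (j : Fin (2*n)) (p : GrpPt n m) :
    (Fin (2*n) → ℝ) × (Fin m → ℝ) :=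
  (Pi.single j 1, fun k => (1/2 : ℝ) * (J k).mulVec p.1 j)

lemma XD_eq (J : Fin m → Matrix (Fin (2*n)) (Fin (2*n)) ℝ)
    {E : Type*} [NormedAddCommGroup E] [NormedSpace ℝ E]
    (j : Fin (2*n)) (f : GrpPt n m → E) (p : GrpPt n m) :
    XD J j f p = fderiv ℝ f p (vj J j p) := by
  have h : vj J j p = (Pi.single j 1, 0)
      + ∑ k, ((1/2 : ℝ) * (J k).mulVec p.1 j) • ((0, Pi.single k 1) : GrpPt n m) := by
    refine Prod.ext ?_ ?_
    · simp [vj, Prod.fst_sum]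
    · simp only [vj, Prod.snd_add, Prod.snd_sum, Prod.smul_snd]
      funext l
      simp [Finset.sum_apply, Pi.single_apply]
  rw [XD, h, map_add, map_sum, Finset.smul_sum]
  congr 1
  refine Finset.sum_congr rfl fun k _ => ?_
  rw [ContinuousLinearMap.map_smul, smul_smul]


/-- coordinate CLMs -/
def cx (i : Fin (2*n)) : GrpPt n m →L[ℝ] ℝ :=
  (ContinuousLinearMap.proj i).comp (ContinuousLinearMap.fst ℝ _ _)
def ct (k : Fin m) : GrpPt n m →L[ℝ] ℝ :=
  (ContinuousLinearMap.proj k).comp (ContinuousLinearMap.snd ℝ _ _)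
def mv (J : Fin m → Matrix (Fin (2*n)) (Fin (2*n)) ℝ) (k : Fin m) (j : Fin (2*n)) :
    GrpPt n m →L[ℝ] ℝ := ∑ i, (J k j i) • cx i

@[simp] lemma cx_apply (i : Fin (2*n)) (v : GrpPt n m) : cx i v = v.1 i := rfl
@[simp] lemma ct_apply (k : Fin m) (v : GrpPt n m) : ct k v = v.2 k := rfl
lemma mv_apply (J : Fin m → Matrix (Fin (2*n)) (Fin (2*n)) ℝ) (k : Fin m) (j : Fin (2*n))
    (v : GrpPt n m) : mv J k j v = (J k).mulVec v.1 j := by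
  simp [mv, Matrix.mulVec, dotProduct, ContinuousLinearMap.sum_apply]

/-- derivative of S1 -/
def LS1 (p : GrpPt n m) : GrpPt n m →L[ℝ] ℝ := ∑ i, ((p.1 i) • cx i + (p.1 i) • cx i)
def LS2 (p : GrpPt n m) : GrpPt n m →L[ℝ] ℝ := ∑ k, ((p.2 k) • ct k + (p.2 k) • ct k)

lemma hS1 (p : GrpPt n m) : HasFDerivAt S1 (LS1 p) p := by
  have : ∀ i : Fin (2*n), HasFDerivAt (fun q : GrpPt n m => q.1 i ^ 2)
      ((p.1 i) • cx i + (p.1 i) • cx i) p := by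
    intro i
    have h := (cx (n := n) (m := m) i).hasFDerivAt (x := p)
    have := h.mul h
    simpa [sq, cx_apply, Pi.mul_def] using this
  exact HasFDerivAt.fun_sum (fun i _ => this i)

lemma hS2 (p : GrpPt n m) : HasFDerivAt S2 (LS2 p) p := by
  have : ∀ k : Fin m, HasFDerivAt (fun q : GrpPt n m => q.2 k ^ 2)
      ((p.2 k) • ct k + (p.2 k) • ct k) p := by
    intro k
    have h := (ct (n := n) (m := m) k).hasFDerivAt (x := p)
    have := h.mul h
    simpa [sq, ct_apply, Pi.mul_def] using this
  exact HasFDerivAt.fun_sum (fun k _ => this k)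

def LQ (p : GrpPt n m) : GrpPt n m →L[ℝ] ℝ :=
  ((S1 p) • LS1 p + (S1 p) • LS1 p) + (16:ℝ) • LS2 p

lemma hQ (p : GrpPt n m) : HasFDerivAt Qf (LQ p) p := by
  have h1 : HasFDerivAt (fun q : GrpPt n m => S1 q ^ 2)
      ((S1 p) • LS1 p + (S1 p) • LS1 p) p := by
    simpa [sq, Pi.mul_def] using (hS1 p).mul (hS1 p)
  have h2 : HasFDerivAt (fun q : GrpPt n m => (16:ℝ) * S2 q) ((16:ℝ) • LS2 p) p :=
    (hS2 p).const_mul 16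
  exact h1.add h2

lemma LS1_apply (p v : GrpPt n m) : LS1 p v = 2 * ∑ i, p.1 i * v.1 i := by
  simp [LS1, ContinuousLinearMap.sum_apply, Finset.mul_sum, Finset.sum_add_distrib]
  rw [Finset.sum_congr rfl (fun i _ => by ring : ∀ i ∈ Finset.univ, 2 * (p.1 i * v.1 i) = p.1 i * v.1 i + p.1 i * v.1 i), Finset.sum_add_distrib]

lemma LS2_apply (p v : GrpPt n m) : LS2 p v = 2 * ∑ k, p.2 k * v.2 k := by
  simp [LS2, ContinuousLinearMap.sum_apply, Finset.mul_sum, Finset.sum_add_distrib]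
  rw [Finset.sum_congr rfl (fun k _ => by ring : ∀ k ∈ Finset.univ, 2 * (p.2 k * v.2 k) = p.2 k * v.2 k + p.2 k * v.2 k), Finset.sum_add_distrib]

lemma LQ_apply (p v : GrpPt n m) :
    LQ p v = 4 * S1 p * (∑ i, p.1 i * v.1 i) + 32 * ∑ k, p.2 k * v.2 k := by
  simp [LQ, ContinuousLinearMap.add_apply, ContinuousLinearMap.smul_apply,
    LS1_apply, LS2_apply]
  ring


def Df (J : Fin m → Matrix (Fin (2*n)) (Fin (2*n)) ℝ) (j : Fin (2*n)) (p : GrpPt n m) : ℝ :=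
  4 * (S1 p * p.1 j) + 16 * ∑ k, p.2 k * (J k).mulVec p.1 j

lemma single_dot (j : Fin (2*n)) (x : Fin (2*n) → ℝ) :
    ∑ i, x i * (Pi.single j 1 : Fin (2*n) → ℝ) i = x j := by
  simp [Pi.single_apply, mul_ite, Finset.sum_ite_eq']

lemma LQ_vj (J : Fin m → Matrix (Fin (2*n)) (Fin (2*n)) ℝ) (j : Fin (2*n)) (p : GrpPt n m) :
    LQ p (vj J j p) = Df J j p := by
  rw [LQ_apply]
  simp only [vj, single_dot]
  have h32 : ∑ k : Fin m, p.2 k * (1/2 * (J k).mulVec p.1 j)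
      = (1/2) * ∑ k, p.2 k * (J k).mulVec p.1 j := by
    rw [Finset.mul_sum]; exact Finset.sum_congr rfl fun k _ => by ring
  rw [h32, Df]; ring

def LD (J : Fin m → Matrix (Fin (2*n)) (Fin (2*n)) ℝ) (j : Fin (2*n)) (p : GrpPt n m) :
    GrpPt n m →L[ℝ] ℝ :=
  (4:ℝ) • ((S1 p) • cx j + (p.1 j) • LS1 p)
    + (16:ℝ) • ∑ k, ((p.2 k) • mv J k j + ((J k).mulVec p.1 j) • ct k)

lemma hDf (J : Fin m → Matrix (Fin (2*n)) (Fin (2*n)) ℝ) (j : Fin (2*n)) (p : GrpPt n m) :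
    HasFDerivAt (Df J j) (LD J j p) p := by
  have h1 : HasFDerivAt (fun q : GrpPt n m => 4 * (S1 q * q.1 j))
      ((4:ℝ) • ((S1 p) • cx j + (p.1 j) • LS1 p)) p := by
    have := ((hS1 (n := n) (m := m) p).mul ((cx (n := n) (m := m) j).hasFDerivAt (x := p))).const_mul (4:ℝ)
    simpa using this
  have h2 : ∀ k : Fin m, HasFDerivAt (fun q : GrpPt n m => q.2 k * (J k).mulVec q.1 j)
      ((p.2 k) • mv J k j + ((J k).mulVec p.1 j) • ct k) p := by
    intro k
    have hc := (ct (n := n) (m := m) k).hasFDerivAt (x := p)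
    have hd := (mv (n := n) (m := m) J k j).hasFDerivAt (x := p)
    have := hc.mul hd
    simp only [Pi.mul_def, ct_apply, mv_apply] at this
    exact this
  have h2' := (HasFDerivAt.fun_sum (fun k (_ : k ∈ Finset.univ) => h2 k)).const_mul (16:ℝ)
  have := h1.add h2'
  refine this.congr_of_eventuallyEq ?_ |>.congr_fderiv ?_
  · filter_upwards with q; simp [Df]
  · rw [LD]

lemma LD_vj (J : Fin m → Matrix (Fin (2*n)) (Fin (2*n)) ℝ)
    (hskew : ∀ k, (J k).transpose = -(J k)) (j : Fin (2*n)) (p : GrpPt n m) :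
    LD J j p (vj J j p) = 4 * S1 p + 8 * p.1 j ^ 2 + 8 * ∑ k, ((J k).mulVec p.1 j) ^ 2 := by
  have hdiag : ∀ k, (J k) j j = 0 := by
    intro k
    have := congrFun (congrFun (hskew k) j) j
    simp [Matrix.transpose_apply] at this
    linarith
  have hmv : ∀ k, mv (n := n) (m := m) J k j (vj J j p) = 0 := by
    intro k
    rw [mv_apply]
    simp only [vj]
    rw [Matrix.mulVec_single]
    simp [hdiag k]
  simp only [LD, ContinuousLinearMap.add_apply, ContinuousLinearMap.smul_apply,
    ContinuousLinearMap.sum_apply, cx_apply, ct_apply, LS1_apply, hmv, smul_eq_mul]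
  simp only [vj, Pi.single_eq_same, single_dot]
  have hsum2 : ∑ x : Fin m, (p.2 x * 0 + (J x).mulVec p.1 j * (1/2 * (J x).mulVec p.1 j))
      = (1/2) * ∑ k, ((J k).mulVec p.1 j)^2 := by
    rw [Finset.mul_sum]; exact Finset.sum_congr rfl fun k _ => by ring
  rw [hsum2]; ring


def gW (β s : ℝ) : ℝ := Real.exp (-(s ^ β))
def g1 (β s : ℝ) : ℝ := gW β s * (-(β * s ^ (β-1)))
def g2 (β s : ℝ) : ℝ := g1 β s * (-(β * s ^ (β-1))) + gW β s * (-(β * ((β-1) * s ^ (β-2))))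

lemma hgW {β s : ℝ} (hs : 0 < s) : HasDerivAt (gW β) (g1 β s) s := by
  have h := Real.hasDerivAt_rpow_const (x := s) (p := β) (Or.inl hs.ne')
  have h2 := h.neg.exp
  unfold gW; simpa [gW, g1, mul_comm] using h2

lemma hg1 {β s : ℝ} (hs : 0 < s) : HasDerivAt (g1 β) (g2 β s) s := by
  have h0 := hgW (β := β) hs
  have h1 : HasDerivAt (fun u : ℝ => -(β * u ^ (β-1))) (-(β * ((β-1) * s ^ (β-2)))) s := by
    have h := Real.hasDerivAt_rpow_const (x := s) (p := β-1) (Or.inl hs.ne')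
    have h' := (h.const_mul β).neg
    have he : β - 1 - 1 = β - 2 := by ring
    rw [he] at h'
    exact h'
  exact h0.mul h1

lemma wA_eq (α : ℝ) : wA (n := n) (m := m) α = fun p => gW (α/4) (Qf p) :=
  funext fun p => by rw [wA, gW, kN_pow]

lemma hwA {α : ℝ} {p : GrpPt n m} (hp : 0 < Qf p) :
    HasFDerivAt (wA α) (g1 (α/4) (Qf p) • LQ p) p := by
  rw [wA_eq]
  exact (hgW hp).comp_hasFDerivAt p (hQ p)

lemma XD_wA (J : Fin m → Matrix (Fin (2*n)) (Fin (2*n)) ℝ) {α : ℝ} {p : GrpPt n m}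
    (hp : 0 < Qf p) (j : Fin (2*n)) :
    XD J j (wA α) p = g1 (α/4) (Qf p) * Df J j p := by
  rw [XD_eq, (hwA hp).fderiv]
  simp [LQ_vj]

def Ff (J : Fin m → Matrix (Fin (2*n)) (Fin (2*n)) ℝ) (α : ℝ) (j : Fin (2*n))
    (p : GrpPt n m) : ℝ := g1 (α/4) (Qf p) * Df J j p

lemma Qf_cont : Continuous (Qf (n := n) (m := m)) := by
  unfold Qf S1 S2
  fun_prop

lemma hFf (J : Fin m → Matrix (Fin (2*n)) (Fin (2*n)) ℝ) {α : ℝ} {p : GrpPt n m}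
    (hp : 0 < Qf p) (j : Fin (2*n)) :
    HasFDerivAt (Ff J α j)
      ((g1 (α/4) (Qf p)) • LD J j p + (Df J j p) • (g2 (α/4) (Qf p) • LQ p)) p := by
  have hg := (hg1 (β := α/4) hp).comp_hasFDerivAt p (hQ p)
  exact hg.mul (hDf J j p)

def Ef (J : Fin m → Matrix (Fin (2*n)) (Fin (2*n)) ℝ) (j : Fin (2*n)) (p : GrpPt n m) : ℝ :=
  4 * S1 p + 8 * p.1 j ^ 2 + 8 * ∑ k, ((J k).mulVec p.1 j) ^ 2

lemma XD_XD_wA (J : Fin m → Matrix (Fin (2*n)) (Fin (2*n)) ℝ)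
    (hskew : ∀ k, (J k).transpose = -(J k)) {α : ℝ} {p : GrpPt n m}
    (hp : 0 < Qf p) (j : Fin (2*n)) :
    XD J j (XD J j (wA α)) p
      = g2 (α/4) (Qf p) * (Df J j p)^2 + g1 (α/4) (Qf p) * Ef J j p := by
  rw [XD_eq]
  have hEq : (XD J j (wA α)) =ᶠ[nhds p] Ff J α j := by
    have hop : IsOpen {q : GrpPt n m | 0 < Qf q} := isOpen_lt continuous_const Qf_cont
    filter_upwards [hop.mem_nhds hp] with q hq
    exact XD_wA J hq j
  rw [hEq.fderiv_eq, (hFf J hp j).fderiv]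
  simp only [ContinuousLinearMap.add_apply, ContinuousLinearMap.smul_apply, smul_eq_mul,
    LQ_vj, LD_vj J hskew j p]
  rw [Ef]; ring


lemma skew_quad (A : Matrix (Fin (2*n)) (Fin (2*n)) ℝ) (hA : A.transpose = -A)
    (x : Fin (2*n) → ℝ) : ∑ j, x j * A.mulVec x j = 0 := by
  have key : ∀ i j, A j i = -(A i j) := by
    intro i j
    have := congrFun (congrFun hA i) j
    simpa [Matrix.transpose_apply] using this
  have h1 : ∑ j, x j * A.mulVec x j = ∑ j, ∑ i, x j * A j i * x i := by
    refine Finset.sum_congr rfl fun j _ => ?_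
    rw [Matrix.mulVec, dotProduct, Finset.mul_sum]
    exact Finset.sum_congr rfl fun i _ => by ring
  have h2 : (∑ j, ∑ i, x j * A j i * x i) = -∑ j, ∑ i, x j * A j i * x i := by
    calc (∑ j, ∑ i, x j * A j i * x i)
        = ∑ j, ∑ i, -(x i * A i j * x j) :=
          Finset.sum_congr rfl fun j _ => Finset.sum_congr rfl fun i _ => by
            rw [key i j]; ring
      _ = ∑ i, ∑ j, -(x i * A i j * x j) := Finset.sum_comm
      _ = -∑ i, ∑ j, x i * A i j * x j := by
          rw [← Finset.sum_neg_distrib]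
          exact Finset.sum_congr rfl fun i _ => by rw [Finset.sum_neg_distrib]
  rw [h1]
  linarith [h2]

def Tt (J : Fin m → Matrix (Fin (2*n)) (Fin (2*n)) ℝ) (p : GrpPt n m) (j : Fin (2*n)) : ℝ :=
  ∑ k, p.2 k * (J k).mulVec p.1 j
def Rr (J : Fin m → Matrix (Fin (2*n)) (Fin (2*n)) ℝ) (p : GrpPt n m) : ℝ :=
  ∑ j, (Tt J p j)^2
def Pp (J : Fin m → Matrix (Fin (2*n)) (Fin (2*n)) ℝ) (p : GrpPt n m) : ℝ :=
  ∑ j, ∑ k, ((J k).mulVec p.1 j)^2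

lemma cross_zero (J : Fin m → Matrix (Fin (2*n)) (Fin (2*n)) ℝ)
    (hskew : ∀ k, (J k).transpose = -(J k)) (p : GrpPt n m) :
    ∑ j, p.1 j * Tt J p j = 0 := by
  have h : ∑ j, p.1 j * Tt J p j = ∑ k, p.2 k * ∑ j, p.1 j * (J k).mulVec p.1 j := by
    calc ∑ j, p.1 j * Tt J p j
        = ∑ j, ∑ k, p.2 k * (p.1 j * (J k).mulVec p.1 j) := by
          refine Finset.sum_congr rfl fun j _ => ?_
          rw [Tt, Finset.mul_sum]
          exact Finset.sum_congr rfl fun k _ => by ring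
      _ = ∑ k, ∑ j, p.2 k * (p.1 j * (J k).mulVec p.1 j) := Finset.sum_comm
      _ = ∑ k, p.2 k * ∑ j, p.1 j * (J k).mulVec p.1 j :=
          Finset.sum_congr rfl fun k _ => by rw [Finset.mul_sum]
  rw [h]
  refine Finset.sum_eq_zero fun k _ => ?_
  rw [skew_quad (J k) (hskew k) p.1, mul_zero]

lemma SD_eq (J : Fin m → Matrix (Fin (2*n)) (Fin (2*n)) ℝ)
    (hskew : ∀ k, (J k).transpose = -(J k)) (p : GrpPt n m) :
    ∑ j, (Df J j p)^2 = 16 * S1 p ^ 3 + 256 * Rr J p := by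
  have expand : ∀ j, (Df J j p)^2
      = 16 * S1 p ^2 * (p.1 j)^2 + 256 * (Tt J p j)^2 + 128 * S1 p * (p.1 j * Tt J p j) := by
    intro j; rw [Df, Tt]; ring
  calc ∑ j, (Df J j p)^2
      = ∑ j, (16 * S1 p ^2 * (p.1 j)^2 + 256 * (Tt J p j)^2
          + 128 * S1 p * (p.1 j * Tt J p j)) := Finset.sum_congr rfl fun j _ => expand j
    _ = 16 * S1 p ^2 * (∑ j, (p.1 j)^2) + 256 * (∑ j, (Tt J p j)^2)
          + 128 * S1 p * (∑ j, p.1 j * Tt J p j) := by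
        rw [Finset.sum_add_distrib, Finset.sum_add_distrib, ← Finset.mul_sum,
          ← Finset.mul_sum, ← Finset.mul_sum]
    _ = 16 * S1 p ^ 3 + 256 * Rr J p := by
        rw [cross_zero J hskew p, Rr]
        have : (∑ j, (p.1 j)^2) = S1 p := rfl
        rw [this]; ring

lemma SE_eq (J : Fin m → Matrix (Fin (2*n)) (Fin (2*n)) ℝ) (p : GrpPt n m) :
    ∑ j, Ef J j p = (8 * (n:ℝ) + 8) * S1 p + 8 * Pp J p := by
  have expand : ∑ j, Ef J j p
      = ∑ j : Fin (2*n), ((4 * S1 p : ℝ) + (8 * (p.1 j)^2 + 8 * ∑ k, ((J k).mulVec p.1 j)^2)) :=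
    Finset.sum_congr rfl fun j _ => by rw [Ef]; ring
  rw [expand, Finset.sum_add_distrib, Finset.sum_add_distrib, Finset.sum_const,
    ← Finset.mul_sum, ← Finset.mul_sum]
  have hcard : (Finset.univ : Finset (Fin (2*n))).card = 2*n := by simp
  rw [hcard]
  have : (∑ j, (p.1 j)^2) = S1 p := rfl
  rw [this]
  have : (∑ j, ∑ k, ((J k).mulVec p.1 j)^2) = Pp J p := rfl
  rw [this, nsmul_eq_mul]
  push_cast
  ring


lemma VA_formula (J : Fin m → Matrix (Fin (2*n)) (Fin (2*n)) ℝ)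
    (hskew : ∀ k, (J k).transpose = -(J k)) (α : ℝ) {p : GrpPt n m} (hp : 0 < Qf p) :
    VA J α p = (1/4) * ((α/4) * Qf p ^ ((α/4)-1))^2 * (∑ j, (Df J j p)^2)
      - (1/2) * ((α/4) * (((α/4)-1) * Qf p ^ ((α/4)-2))) * (∑ j, (Df J j p)^2)
      - (1/2) * ((α/4) * Qf p ^ ((α/4)-1)) * (∑ j, Ef J j p) := by
  have hgrad : gradSq J (wA α) p = (g1 (α/4) (Qf p))^2 * ∑ j, (Df J j p)^2 := by
    rw [gradSq, Finset.mul_sum]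
    exact Finset.sum_congr rfl fun j _ => by rw [XD_wA J hp j]; ring
  have hL : LSub J (wA α) p
      = -(g2 (α/4) (Qf p) * ∑ j, (Df J j p)^2 + g1 (α/4) (Qf p) * ∑ j, Ef J j p) := by
    rw [LSub, Finset.mul_sum, Finset.mul_sum, ← Finset.sum_add_distrib, neg_inj]
    exact Finset.sum_congr rfl fun j _ => by rw [XD_XD_wA J hskew hp j]
  have hw : wA α p = gW (α/4) (Qf p) := congrFun (wA_eq α) p
  rw [VA, hgrad, hL, hw]
  have hgW : gW (α/4) (Qf p) ≠ 0 := Real.exp_ne_zero _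
  simp only [g1, g2]
  field_simp
  ring

def CJ (J : Fin m → Matrix (Fin (2*n)) (Fin (2*n)) ℝ) : ℝ := ∑ j, ∑ k, ∑ i, (J k j i)^2

lemma CJ_nonneg (J : Fin m → Matrix (Fin (2*n)) (Fin (2*n)) ℝ) : 0 ≤ CJ J :=
  Finset.sum_nonneg fun _ _ => Finset.sum_nonneg fun _ _ => Finset.sum_nonneg fun _ _ => sq_nonneg _

lemma mulVec_entry (A : Matrix (Fin (2*n)) (Fin (2*n)) ℝ) (x : Fin (2*n) → ℝ) (j : Fin (2*n)) :
    A.mulVec x j = ∑ i, A j i * x i := rfl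

lemma Pp_le (J : Fin m → Matrix (Fin (2*n)) (Fin (2*n)) ℝ) (p : GrpPt n m) :
    Pp J p ≤ CJ J * S1 p := by
  rw [Pp, CJ, Finset.sum_mul]
  refine Finset.sum_le_sum fun j _ => ?_
  rw [Finset.sum_mul]
  refine Finset.sum_le_sum fun k _ => ?_
  rw [mulVec_entry]
  exact Finset.sum_mul_sq_le_sq_mul_sq Finset.univ _ _

lemma Rr_le (J : Fin m → Matrix (Fin (2*n)) (Fin (2*n)) ℝ) (p : GrpPt n m) :
    Rr J p ≤ CJ J * S2 p * S1 p := by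
  have h1 : Rr J p ≤ S2 p * Pp J p := by
    rw [Rr, Pp, Finset.mul_sum]
    refine Finset.sum_le_sum fun j _ => ?_
    rw [Tt]
    exact Finset.sum_mul_sq_le_sq_mul_sq Finset.univ _ _
  have h2 : S2 p * Pp J p ≤ S2 p * (CJ J * S1 p) :=
    mul_le_mul_of_nonneg_left (Pp_le J p) (S2_nonneg p)
  calc Rr J p ≤ S2 p * (CJ J * S1 p) := h1.trans h2
    _ = CJ J * S2 p * S1 p := by ring

lemma Tt_eq_mulVec (J : Fin m → Matrix (Fin (2*n)) (Fin (2*n)) ℝ) (p : GrpPt n m)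
    (j : Fin (2*n)) : Tt J p j = (∑ k, p.2 k • J k).mulVec p.1 j := by
  rw [Tt, mulVec_entry]
  have hentry : ∀ i, (∑ k, p.2 k • J k) j i = ∑ k, p.2 k * J k j i := by
    intro i
    rw [Matrix.sum_apply]
    exact Finset.sum_congr rfl fun k _ => rfl
  calc ∑ k, p.2 k * (J k).mulVec p.1 j
      = ∑ k, ∑ i, p.2 k * J k j i * p.1 i := by
        refine Finset.sum_congr rfl fun k _ => ?_
        rw [mulVec_entry, Finset.mul_sum]
        exact Finset.sum_congr rfl fun i _ => by ring
    _ = ∑ i, ∑ k, p.2 k * J k j i * p.1 i := Finset.sum_comm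
    _ = ∑ i, (∑ k, p.2 k • J k) j i * p.1 i := by
        refine Finset.sum_congr rfl fun i _ => ?_
        rw [hentry i, Finset.sum_mul]

lemma S1_cont : Continuous (S1 (n := n) (m := m)) := by unfold S1; fun_prop
lemma S2_cont : Continuous (S2 (n := n) (m := m)) := by unfold S2; fun_prop

lemma Rr_cont (J : Fin m → Matrix (Fin (2*n)) (Fin (2*n)) ℝ) :
    Continuous (Rr (n := n) (m := m) J) := by
  unfold Rr Tt
  refine continuous_finset_sum _ fun j _ => Continuous.pow ?_ 2
  refine continuous_finset_sum _ fun k _ => Continuous.mul (by fun_prop) ?_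
  simp only [mulVec_entry]
  fun_prop

lemma sum_sq_eq_zero {k : ℕ} {x : Fin k → ℝ} (h : ∑ i, (x i)^2 = 0) : x = 0 := by
  funext i
  have h3 := (Finset.sum_eq_zero_iff_of_nonneg
    (fun i (_ : i ∈ Finset.univ) => sq_nonneg (x i))).mp h i (Finset.mem_univ i)
  simpa using pow_eq_zero_iff (n := 2) (by norm_num) |>.mp h3

lemma met_lower (hn : 1 ≤ n) (hm : 1 ≤ m) (J : Fin m → Matrix (Fin (2*n)) (Fin (2*n)) ℝ)
    (hMet : ∀ t : Fin m → ℝ, t ≠ 0 → IsUnit (∑ k, t k • J k)) :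
    ∃ c0 : ℝ, 0 < c0 ∧ ∀ p : GrpPt n m, c0 * S2 p * S1 p ≤ Rr J p := by
  classical
  set K : Set (GrpPt n m) := {q | S1 q = 1 ∧ S2 q = 1} with hK
  have hclosed : IsClosed K :=
    ((isClosed_eq S1_cont continuous_const).inter (isClosed_eq S2_cont continuous_const))
  have hsub : K ⊆ Metric.closedBall 0 1 := by
    rintro q ⟨h1, h2⟩
    rw [Metric.mem_closedBall, dist_zero_right]
    rw [Prod.norm_def]
    have hb : ∀ {k : ℕ} (y : Fin k → ℝ), ∑ i, (y i)^2 = 1 → ‖y‖ ≤ 1 := by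
      intro k y hy
      refine (pi_norm_le_iff_of_nonneg zero_le_one).mpr fun i => ?_
      have hle : (y i)^2 ≤ 1 := by
        have := Finset.single_le_sum (f := fun i => (y i)^2)
          (fun i _ => sq_nonneg (y i)) (Finset.mem_univ i)
        simpa [hy] using this
      have := sq_abs (y i)
      have := abs_nonneg (y i)
      rw [Real.norm_eq_abs]
      nlinarith
    exact max_le (hb q.1 h1) (hb q.2 h2)
  have hcomp : IsCompact K :=
    (isCompact_closedBall (0 : GrpPt n m) 1).of_isClosed_subset hclosed hsub
  have hne : K.Nonempty := by
    refine ⟨(Pi.single ⟨0, by omega⟩ 1, Pi.single ⟨0, by omega⟩ 1), ?_, ?_⟩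
    · unfold S1
      rw [Finset.sum_eq_single ⟨0, by omega⟩]
      · simp
      · intro i _ hi
        simp [Pi.single_apply, hi]
      · intro h; exact absurd (Finset.mem_univ _) h
    · unfold S2
      rw [Finset.sum_eq_single ⟨0, by omega⟩]
      · simp
      · intro i _ hi
        simp [Pi.single_apply, hi]
      · intro h; exact absurd (Finset.mem_univ _) h
  obtain ⟨q0, hq0K, hq0min⟩ := hcomp.exists_isMinOn hne (Rr_cont J).continuousOn
  refine ⟨Rr J q0, ?_, ?_⟩
  · rcases (Finset.sum_nonneg fun j (_ : j ∈ Finset.univ) =>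
      sq_nonneg (Tt J q0 j)).lt_or_eq with h | h
    · exact h
    · exfalso
      have hT : ∀ j, Tt J q0 j = 0 := by
        intro j
        have := (Finset.sum_eq_zero_iff_of_nonneg
          (fun j (_ : j ∈ Finset.univ) => sq_nonneg (Tt J q0 j))).mp h.symm j (Finset.mem_univ j)
        simpa using pow_eq_zero_iff (n := 2) (by norm_num) |>.mp this
      have ht0 : q0.2 ≠ 0 := by
        intro h0
        have : S2 q0 = 0 := by unfold S2; rw [h0]; simp
        rw [hq0K.2] at this; exact one_ne_zero this
      have hx0 : q0.1 ≠ 0 := by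
        intro h0
        have : S1 q0 = 0 := by unfold S1; rw [h0]; simp
        rw [hq0K.1] at this; exact one_ne_zero this
      have hunit := hMet q0.2 ht0
      have hinj := Matrix.mulVec_injective_iff_isUnit.mpr hunit
      have hMv : (∑ k, q0.2 k • J k).mulVec q0.1 = 0 := by
        funext j
        rw [← Tt_eq_mulVec J q0 j, hT j]; rfl
      have : q0.1 = 0 := by
        apply hinj
        rw [hMv, Matrix.mulVec_zero]
      exact hx0 this
  · intro p
    by_cases hS1 : S1 p = 0
    · have hx : p.1 = 0 := sum_sq_eq_zero hS1
      have : Rr J p = 0 := by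
        refine Finset.sum_eq_zero fun j _ => ?_
        have : Tt J p j = 0 := by
          rw [Tt_eq_mulVec, hx, Matrix.mulVec_zero]; rfl
        rw [this]; ring
      rw [this, hS1, mul_zero]
    by_cases hS2 : S2 p = 0
    · have ht : p.2 = 0 := sum_sq_eq_zero hS2
      have hRr : (0:ℝ) ≤ Rr J p := Finset.sum_nonneg fun j _ => sq_nonneg _
      rw [hS2]; simpa using hRr
    · have hS1p : 0 < S1 p := (S1_nonneg p).lt_of_ne (Ne.symm hS1)
      have hS2p : 0 < S2 p := (S2_nonneg p).lt_of_ne (Ne.symm hS2)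
      set a := Real.sqrt (S2 p) with ha
      set b := Real.sqrt (S1 p) with hb
      have hap : 0 < a := Real.sqrt_pos.mpr hS2p
      have hbp : 0 < b := Real.sqrt_pos.mpr hS1p
      have ha2 : a^2 = S2 p := Real.sq_sqrt hS2p.le
      have hb2 : b^2 = S1 p := Real.sq_sqrt hS1p.le
      set q : GrpPt n m := (b⁻¹ • p.1, a⁻¹ • p.2) with hq
      have hqK : q ∈ K := by
        constructor
        · unfold S1
          have : ∑ i, ((b⁻¹ • p.1) i)^2 = b⁻¹^2 * ∑ i, (p.1 i)^2 := by
            rw [Finset.mul_sum]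
            exact Finset.sum_congr rfl fun i _ => by
              simp [Pi.smul_apply, smul_eq_mul]; ring
          rw [this]
          have : (∑ i, (p.1 i)^2) = S1 p := rfl
          rw [this, ← hb2]
          field_simp
        · unfold S2
          have : ∑ k, ((a⁻¹ • p.2) k)^2 = a⁻¹^2 * ∑ k, (p.2 k)^2 := by
            rw [Finset.mul_sum]
            exact Finset.sum_congr rfl fun k _ => by
              simp [Pi.smul_apply, smul_eq_mul]; ring
          rw [this]
          have : (∑ k, (p.2 k)^2) = S2 p := rfl
          rw [this, ← ha2]
          field_simp
      have hscale : Rr J q = a⁻¹^2 * b⁻¹^2 * Rr J p := by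
        unfold Rr
        rw [Finset.mul_sum]
        refine Finset.sum_congr rfl fun j _ => ?_
        have hTq : Tt J q j = a⁻¹ * b⁻¹ * Tt J p j := by
          unfold Tt
          rw [Finset.mul_sum]
          refine Finset.sum_congr rfl fun k _ => ?_
          have : (J k).mulVec (b⁻¹ • p.1) j = b⁻¹ * (J k).mulVec p.1 j := by
            rw [Matrix.mulVec_smul]; rfl
          rw [hq]
          simp only [Pi.smul_apply, smul_eq_mul]
          rw [this]; ring
        rw [hTq]; ring
      have hmin := hq0min hqK
      have : Rr J q0 ≤ a⁻¹^2 * b⁻¹^2 * Rr J p := by rw [← hscale]; exact hmin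
      have hfin : Rr J q0 * (a^2 * b^2) ≤ Rr J p := by
        have h2 := mul_le_mul_of_nonneg_right this (by positivity : (0:ℝ) ≤ a^2 * b^2)
        calc Rr J q0 * (a^2*b^2) ≤ a⁻¹^2 * b⁻¹^2 * Rr J p * (a^2*b^2) := h2
          _ = Rr J p := by field_simp
      calc Rr J q0 * S2 p * S1 p = Rr J q0 * (a^2 * b^2) := by rw [ha2, hb2]; ring
        _ ≤ Rr J p := hfin


lemma e2norm_sq {k : ℕ} (x : Fin k → ℝ) : e2norm x ^ 2 = ∑ i, (x i)^2 :=
  Real.sq_sqrt (by positivity)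

set_option maxHeartbeats 2000000 in
lemma main (n m : ℕ) (hn : 1 ≤ n) (hm : 1 ≤ m)
    (J : Fin m → Matrix (Fin (2*n)) (Fin (2*n)) ℝ)
    (hskew : ∀ k, (J k).transpose = -(J k))
    (hMet : ∀ t : Fin m → ℝ, t ≠ 0 → IsUnit (∑ k, t k • J k)) :
    ∀ α : ℝ, 0 < α → ∃ c₁ c₂ c₃ c₄ : ℝ, 0 < c₁ ∧ 0 < c₂ ∧ 0 < c₃ ∧
      ∀ p : GrpPt n m, p ≠ 0 →
        kN p ^ (2*α - 4) * e2norm p.1 ^ 2 * (c₁ - c₂ / kN p ^ α) ≤ VA J α p ∧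
        VA J α p ≤ kN p ^ (2*α - 4) * e2norm p.1 ^ 2 * (c₃ - c₄ / kN p ^ α) := by
  intro α hα
  obtain ⟨c0, hc0, hlow⟩ := met_lower hn hm J hMet
  set β : ℝ := α/4 with hβdef
  have hβ : 0 < β := by positivity
  set C : ℝ := CJ J + 1 with hCdef
  have hC : 0 < C := by have := CJ_nonneg J; linarith
  set d1 : ℝ := min 16 (16*c0) with hd1def
  have hd1 : 0 < d1 := lt_min (by norm_num) (by linarith)
  have hd1a : d1 ≤ 16 := min_le_left _ _
  have hd1b : d1 ≤ 16*c0 := min_le_right _ _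
  set d2 : ℝ := max 16 (16*C) with hd2def
  have hd2a : (16:ℝ) ≤ d2 := le_max_left _ _
  have hd2b : 16*C ≤ d2 := le_max_right _ _
  have hd2 : 0 < d2 := by linarith
  set e3 : ℝ := (8*(n:ℝ)+8) + 8*C with he3def
  have he3 : 0 < e3 := by positivity
  refine ⟨(1/4)*β^2*d1, (1/2)*β*(abs (β-1))*d2 + (1/2)*β*e3, (1/4)*β^2*d2,
    -((1/2)*β*(abs (β-1))*d2), ?_, ?_, ?_, ?_⟩
  · positivity
  · have h1 : (0:ℝ) ≤ (1/2)*β*(abs (β-1))*d2 := by positivity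
    have h2 : (0:ℝ) < (1/2)*β*e3 := by positivity
    linarith
  · positivity
  · intro p hp
    clear_value β C d1 d2 e3
    have hs : 0 < Qf p := Qf_pos hp
    set s : ℝ := Qf p with hsdef
    set A : ℝ := s ^ (β-1) with hAdef
    set B : ℝ := s ^ (β-2) with hBdef
    have hA : 0 < A := Real.rpow_pos_of_pos hs _
    have hB : 0 < B := Real.rpow_pos_of_pos hs _
    have hBs : B * s = A := by
      rw [hAdef, hBdef, show β - 1 = (β-2) + 1 from by ring, Real.rpow_add hs, Real.rpow_one]
    have hγ : kN p ^ (2*α-4) = A*A*s := by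
      rw [kN_pow (2*α-4) p, ← hsdef]
      rw [show (2*α-4)/4 = (β-1) + ((β-1) + 1) from by rw [hβdef]; ring]
      rw [Real.rpow_add hs, Real.rpow_add hs, Real.rpow_one, ← hAdef]
      ring
    have hβ' : kN p ^ α = A*s := by
      rw [kN_pow α p, ← hsdef, ← hβdef]
      rw [show β = (β-1) + 1 from by ring]
      rw [Real.rpow_add hs, Real.rpow_one, ← hAdef]
    set X : ℝ := S1 p with hXdef
    have hX : 0 ≤ X := S1_nonneg p
    have hS2 : 0 ≤ S2 p := S2_nonneg p
    set SD : ℝ := ∑ j, (Df J j p)^2 with hSDdef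
    set SE : ℝ := ∑ j, Ef J j p with hSEdef
    have hSDnn : 0 ≤ SD := Finset.sum_nonneg fun _ _ => sq_nonneg _
    have hPp : 0 ≤ Pp J p := Finset.sum_nonneg fun _ _ => Finset.sum_nonneg fun _ _ => sq_nonneg _
    have hRnn : 0 ≤ Rr J p := Finset.sum_nonneg fun _ _ => sq_nonneg _
    have hcube : (0:ℝ) ≤ X*X*X := mul_nonneg (mul_nonneg hX hX) hX
    have hsval : s = X^2 + 16 * S2 p := rfl
    clear_value SD SE X B A s
    have hSD_lo : d1 * X * s ≤ SD := by
      rw [hSDdef, SD_eq J hskew p, ← hXdef, hsval]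
      have hR := hlow p
      rw [← hXdef] at hR
      have hq1 : d1*(X*X*X) ≤ 16*(X*X*X) := mul_le_mul_of_nonneg_right hd1a hcube
      have hq2 : d1*(S2 p*X) ≤ (16*c0)*(S2 p*X) :=
        mul_le_mul_of_nonneg_right hd1b (mul_nonneg hS2 hX)
      linarith [hq1, hq2, hR]
    have hCJC : CJ J ≤ C := by rw [hCdef]; linarith
    have hSD_hi : SD ≤ d2 * X * s := by
      rw [hSDdef, SD_eq J hskew p, ← hXdef, hsval]
      have hR := Rr_le J p
      rw [← hXdef] at hR
      have hq1 : 16*(X*X*X) ≤ d2*(X*X*X) := mul_le_mul_of_nonneg_right hd2a hcube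
      have hRC : CJ J * S2 p * X ≤ C * (S2 p * X) := by
        rw [mul_assoc]
        exact mul_le_mul_of_nonneg_right hCJC (mul_nonneg hS2 hX)
      have hq2 : (16*C)*(S2 p*X) ≤ d2*(S2 p*X) :=
        mul_le_mul_of_nonneg_right hd2b (mul_nonneg hS2 hX)
      linarith [hq1, hq2, hR, hRC]
    have hSE_lo : 0 ≤ SE := by
      rw [hSEdef, SE_eq J p, ← hXdef]
      have : (0:ℝ) ≤ (8*(n:ℝ)+8) * X := by positivity
      linarith [mul_nonneg (by norm_num : (0:ℝ) ≤ 8) hPp]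
    have hSE_hi : SE ≤ e3 * X := by
      rw [hSEdef, SE_eq J p, he3def, ← hXdef]
      have hP := Pp_le J p
      rw [← hXdef] at hP
      have hq : CJ J * X ≤ C * X := mul_le_mul_of_nonneg_right hCJC hX
      linarith [hP, hq]
    have hVA := VA_formula J hskew α (p := p) (hsdef ▸ hs)
    rw [← hsdef, ← hβdef, ← hAdef, ← hBdef, ← hSDdef, ← hSEdef] at hVA
    -- term bounds
    have hT1lo : (1/4)*β^2*d1*(A*A*s*X) ≤ (1/4)*(β*A)^2*SD := by
      have h := mul_le_mul_of_nonneg_left hSD_lo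
        (show (0:ℝ) ≤ (1/4)*β^2*A^2 by positivity)
      linarith [h]
    have hT1hi : (1/4)*(β*A)^2*SD ≤ (1/4)*β^2*d2*(A*A*s*X) := by
      have h := mul_le_mul_of_nonneg_left hSD_hi
        (show (0:ℝ) ≤ (1/4)*β^2*A^2 by positivity)
      linarith [h]
    have hBSD_hi : B*SD ≤ d2*X*A := by
      have h := mul_le_mul_of_nonneg_left hSD_hi hB.le
      calc B*SD ≤ B*(d2*X*s) := h
        _ = d2*X*(B*s) := by ring
        _ = d2*X*A := by rw [hBs]
    have hBSDnn : 0 ≤ B*SD := mul_nonneg hB.le hSDnn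
    have p1 : 0 ≤ ((abs (β-1)) - (β-1)) * (B*SD) :=
      mul_nonneg (by linarith [le_abs_self (β-1)]) hBSDnn
    have p3 : 0 ≤ ((abs (β-1)) + (β-1)) * (B*SD) :=
      mul_nonneg (by linarith [neg_abs_le (β-1)]) hBSDnn
    have p2 : 0 ≤ (abs (β-1)) * (d2*X*A - B*SD) :=
      mul_nonneg (abs_nonneg _) (by linarith)
    have key_lo : 0 ≤ β * ((abs (β-1)) * (d2*X*A - B*SD) + ((abs (β-1)) - (β-1)) * (B*SD)) :=
      mul_nonneg hβ.le (add_nonneg p2 p1)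
    have key_hi : 0 ≤ β * ((abs (β-1)) * (d2*X*A - B*SD) + ((abs (β-1)) + (β-1)) * (B*SD)) :=
      mul_nonneg hβ.le (add_nonneg p2 p3)
    have hT2lo : -((1/2)*β*(abs (β-1))*d2*(X*A)) ≤ -((1/2)*(β*((β-1)*B))*SD) := by linarith [key_lo]
    have hT2hi : -((1/2)*(β*((β-1)*B))*SD) ≤ (1/2)*β*(abs (β-1))*d2*(X*A) := by linarith [key_hi]
    have hT3lo : -((1/2)*β*e3*(X*A)) ≤ -((1/2)*(β*A)*SE) := by
      have h := mul_le_mul_of_nonneg_left hSE_hi (mul_nonneg (by linarith : (0:ℝ) ≤ (1/2)*β) hA.le)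
      linarith [h]
    have hT3hi : -((1/2)*(β*A)*SE) ≤ 0 := by
      have := mul_nonneg (mul_nonneg (mul_nonneg (by norm_num : (0:ℝ) ≤ 1/2) hβ.le) hA.le) hSE_lo
      linarith [this]
    have hAs : 0 < A * s := mul_pos hA hs
    constructor
    · rw [hγ, hβ', e2norm_sq, hVA]
      have hXe : ∑ i, (p.1 i)^2 = X := by rw [hXdef]; rfl
      rw [hXe]
      have hlhs : A*A*s*X*((1/4)*β^2*d1 - ((1/2)*β*(abs (β-1))*d2 + (1/2)*β*e3) / (A*s))
          = (1/4)*β^2*d1*(A*A*s*X) - ((1/2)*β*(abs (β-1))*d2*(X*A) + (1/2)*β*e3*(X*A)) := by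
        field_simp
      rw [hlhs]
      linarith
    · rw [hγ, hβ', e2norm_sq, hVA]
      have hXe : ∑ i, (p.1 i)^2 = X := by rw [hXdef]; rfl
      rw [hXe]
      have hlhs : A*A*s*X*((1/4)*β^2*d2 - (-((1/2)*β*(abs (β-1))*d2)) / (A*s))
          = (1/4)*β^2*d2*(A*A*s*X) + (1/2)*β*(abs (β-1))*d2*(X*A) := by
        field_simp
        ring
      rw [hlhs]
      linarith

end MetAux

/-- Two-sided bound for the potential `V_α` on `G*`. -/
theorem potential_bounds (n m : ℕ) (hn : 1 ≤ n) (hm : 1 ≤ m)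
    (J : Fin m → Matrix (Fin (2*n)) (Fin (2*n)) ℝ)
    (hskew : ∀ k, (J k).transpose = -(J k))
    (hMet : ∀ t : Fin m → ℝ, t ≠ 0 → IsUnit (∑ k, t k • J k)) :
    ∀ α : ℝ, 0 < α → ∃ c₁ c₂ c₃ c₄ : ℝ, 0 < c₁ ∧ 0 < c₂ ∧ 0 < c₃ ∧
      ∀ p : GrpPt n m, p ≠ 0 →
        kN p ^ (2*α - 4) * e2norm p.1 ^ 2 * (c₁ - c₂ / kN p ^ α) ≤ VA J α p ∧
        VA J α p ≤ kN p ^ (2*α - 4) * e2norm p.1 ^ 2 * (c₃ - c₄ / kN p ^ α) :=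
  MetAux.main n m hn hm J hskew hMet

end
end

section
/- For every α ≥ 2 the potential V_α is bounded from below on G*, i.e. there exists a constant K ∈ ℝ such that V_α(x,t) ≥ K for all (x,t) ∈ G*. -/
open MeasureTheory Filter
open scoped BigOperators ENNReal NNReal

noncomputable section

namespace Met

variable {n m : ℕ}

def sqs {k : ℕ} (x : Fin k → ℝ) : ℝ := ∑ i, (x i)^2

lemma sqs_nonneg {k : ℕ} (x : Fin k → ℝ) : 0 ≤ sqs x :=
  Finset.sum_nonneg fun i _ => sq_nonneg _

lemma sqs_eq_zero {k : ℕ} {x : Fin k → ℝ} (h : sqs x = 0) : x = 0 := by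
  funext i
  have := (Finset.sum_eq_zero_iff_of_nonneg (fun i _ => sq_nonneg (x i))).1 h i (Finset.mem_univ i)
  simpa using this

lemma sqs_smul {k : ℕ} (c : ℝ) (x : Fin k → ℝ) : sqs (c • x) = c^2 * sqs x := by
  simp [sqs, mul_pow, Finset.mul_sum]

def rho (p : GrpPt n m) : ℝ := (sqs p.1)^2 + 16 * sqs p.2

lemma rho_nonneg (p : GrpPt n m) : 0 ≤ rho p :=
  add_nonneg (sq_nonneg _) (mul_nonneg (by norm_num) (sqs_nonneg _))

lemma rho_pos {p : GrpPt n m} (hp : p ≠ 0) : 0 < rho p := by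
  rcases (rho_nonneg p).lt_or_eq with h | h
  · exact h
  · exfalso; apply hp
    rw [rho] at h
    have h1 : sqs p.1 = 0 ∧ sqs p.2 = 0 := by
      constructor <;> nlinarith [sqs_nonneg p.1, sqs_nonneg p.2, sq_nonneg (sqs p.1)]
    have := sqs_eq_zero h1.1
    have := sqs_eq_zero h1.2
    exact Prod.ext (by assumption) (by assumption)

def pr1 (j : Fin (2*n)) : GrpPt n m →L[ℝ] ℝ :=
  (ContinuousLinearMap.proj j).comp (ContinuousLinearMap.fst ℝ (Fin (2*n) → ℝ) (Fin m → ℝ))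
def pr2 (k : Fin m) : GrpPt n m →L[ℝ] ℝ :=
  (ContinuousLinearMap.proj k).comp (ContinuousLinearMap.snd ℝ (Fin (2*n) → ℝ) (Fin m → ℝ))

@[simp] lemma pr1_apply (j : Fin (2*n)) (v : GrpPt n m) : pr1 j v = v.1 j := rfl
@[simp] lemma pr2_apply (k : Fin m) (v : GrpPt n m) : pr2 k v = v.2 k := rfl

def Dsq1 (p : GrpPt n m) : GrpPt n m →L[ℝ] ℝ := ∑ i, (2 * p.1 i) • pr1 i
def Dsq2 (p : GrpPt n m) : GrpPt n m →L[ℝ] ℝ := ∑ k, (2 * p.2 k) • pr2 k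

lemma hasFDerivAt_sqs1 (p : GrpPt n m) :
    HasFDerivAt (fun p : GrpPt n m => sqs p.1) (Dsq1 p) p := by
  have h : ∀ i ∈ Finset.univ, HasFDerivAt (fun p : GrpPt n m => (p.1 i)^2)
      ((2 * p.1 i) • pr1 i) p := by
    intro i _
    have := ((pr1 (n:=n) (m:=m) i).hasFDerivAt (x := p)).fun_mul ((pr1 (n:=n) (m:=m) i).hasFDerivAt (x := p))
    have e : (p.1 i) • pr1 (n:=n) (m:=m) i + (p.1 i) • pr1 i = (2 * p.1 i) • pr1 i := by
      refine ContinuousLinearMap.ext fun v => ?_; simp; ring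
    rw [← e]
    simpa [pow_two] using this
  exact HasFDerivAt.fun_sum h

lemma hasFDerivAt_sqs2 (p : GrpPt n m) :
    HasFDerivAt (fun p : GrpPt n m => sqs p.2) (Dsq2 p) p := by
  have h : ∀ k ∈ Finset.univ, HasFDerivAt (fun p : GrpPt n m => (p.2 k)^2)
      ((2 * p.2 k) • pr2 k) p := by
    intro k _
    have := ((pr2 (n:=n) (m:=m) k).hasFDerivAt (x := p)).fun_mul ((pr2 (n:=n) (m:=m) k).hasFDerivAt (x := p))
    have e : (p.2 k) • pr2 (n:=n) (m:=m) k + (p.2 k) • pr2 k = (2 * p.2 k) • pr2 k := by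
      refine ContinuousLinearMap.ext fun v => ?_; simp; ring
    rw [← e]
    simpa [pow_two] using this
  exact HasFDerivAt.fun_sum h

def Drho (p : GrpPt n m) : GrpPt n m →L[ℝ] ℝ :=
  (4 * sqs p.1) • (∑ i, p.1 i • pr1 i) + (32:ℝ) • (∑ k, p.2 k • pr2 k)

lemma Drho_apply (p v : GrpPt n m) :
    Drho p v = 4 * sqs p.1 * ∑ i, p.1 i * v.1 i + 32 * ∑ k, p.2 k * v.2 k := by
  simp [Drho, ContinuousLinearMap.sum_apply, Finset.mul_sum]

lemma hasFDerivAt_rho (p : GrpPt n m) : HasFDerivAt (rho (n:=n) (m:=m)) (Drho p) p := by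
  have h := (((hasFDerivAt_sqs1 p).mul (hasFDerivAt_sqs1 p)).add ((hasFDerivAt_sqs2 p).const_mul 16))
  have he : (sqs p.1 • Dsq1 p + sqs p.1 • Dsq1 p) + (16:ℝ) • Dsq2 p = Drho p := by
    refine ContinuousLinearMap.ext fun v => ?_
    simp [Dsq1, Dsq2, Drho, ContinuousLinearMap.sum_apply, Finset.mul_sum]
    rw [← Finset.sum_add_distrib]
    congr 1
    · exact Finset.sum_congr rfl fun i _ => by ring
    · exact Finset.sum_congr rfl fun k _ => by ring
  rw [← he]
  have : (rho (n:=n) (m:=m)) = fun p => sqs p.1 * sqs p.1 + 16 * sqs p.2 := by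
    funext q; rw [rho]; ring
  rw [this]
  exact h


variable {J : Fin m → Matrix (Fin (2*n)) (Fin (2*n)) ℝ}

/-- the XD-combination of a continuous linear functional -/
def comb (J : Fin m → Matrix (Fin (2*n)) (Fin (2*n)) ℝ) (j : Fin (2*n)) (p : GrpPt n m)
    (D : GrpPt n m →L[ℝ] ℝ) : ℝ :=
  D (Pi.single j 1, 0) + (1/2 : ℝ) * ∑ k, ((J k).mulVec p.1 j) * D (0, Pi.single k 1)

lemma XD_eval {f : GrpPt n m → ℝ} {D : GrpPt n m →L[ℝ] ℝ} {p : GrpPt n m}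
    (h : HasFDerivAt f D p) (j : Fin (2*n)) :
    XD J j f p = comb J j p D := by
  rw [XD, h.fderiv, comb]
  simp [smul_eq_mul, Finset.mul_sum]

lemma comb_add (j : Fin (2*n)) (p : GrpPt n m) (D₁ D₂ : GrpPt n m →L[ℝ] ℝ) :
    comb J j p (D₁ + D₂) = comb J j p D₁ + comb J j p D₂ := by
  simp only [comb, ContinuousLinearMap.add_apply, Finset.mul_sum]
  have : ∀ k : Fin m, 1/2 * ((J k).mulVec p.1 j * (D₁ (0, Pi.single k 1) + D₂ (0, Pi.single k 1)))
      = 1/2 * ((J k).mulVec p.1 j * D₁ (0, Pi.single k 1)) + 1/2 * ((J k).mulVec p.1 j * D₂ (0, Pi.single k 1)) := fun k => by ring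
  rw [Finset.sum_congr rfl fun k _ => this k, Finset.sum_add_distrib]
  ring

lemma comb_smul (j : Fin (2*n)) (p : GrpPt n m) (a : ℝ) (D : GrpPt n m →L[ℝ] ℝ) :
    comb J j p (a • D) = a * comb J j p D := by
  simp only [comb, ContinuousLinearMap.smul_apply, smul_eq_mul]
  rw [Finset.mul_sum, Finset.mul_sum, mul_add, Finset.mul_sum]
  congr 1
  exact Finset.sum_congr rfl fun k _ => by ring

lemma sum_mul_single {k : ℕ} (x : Fin k → ℝ) (j : Fin k) :
    ∑ i, x i * (Pi.single j 1 : Fin k → ℝ) i = x j := by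
  rw [Finset.sum_eq_single j]
  · simp
  · intro i _ hij; simp [Pi.single_apply, hij]
  · simp

def Aj (J : Fin m → Matrix (Fin (2*n)) (Fin (2*n)) ℝ) (j : Fin (2*n)) (p : GrpPt n m) : ℝ :=
  4 * sqs p.1 * p.1 j + 16 * ∑ k, p.2 k * (J k).mulVec p.1 j

lemma comb_Drho (j : Fin (2*n)) (p : GrpPt n m) :
    comb J j p (Drho p) = Aj J j p := by
  have e1 : Drho p (Pi.single j 1, 0) = 4 * sqs p.1 * p.1 j := by
    rw [Drho_apply]; simp [sum_mul_single]
  have e2 : ∀ k : Fin m, Drho p ((0 : Fin (2*n) → ℝ), Pi.single k 1) = 32 * p.2 k := by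
    intro k; rw [Drho_apply]; simp [sum_mul_single]
  rw [comb, e1, Aj]
  congr 1
  rw [Finset.mul_sum, Finset.mul_sum]
  exact Finset.sum_congr rfl fun k _ => by rw [e2 k]; ring

/-- 1-d profile functions -/
def gE (a s : ℝ) : ℝ := Real.exp (-(s ^ a))
def gA (a s : ℝ) : ℝ := -(a * s ^ (a-1)) * gE a s
def gB (a s : ℝ) : ℝ := -(a * ((a-1) * s ^ (a-2))) * gE a s + -(a * s ^ (a-1)) * gA a s

lemma gE_pos (a s : ℝ) : 0 < gE a s := Real.exp_pos _

lemma hasDerivAt_gE {s : ℝ} (hs : 0 < s) (a : ℝ) : HasDerivAt (gE a) (gA a s) s := by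
  have h := (Real.hasDerivAt_rpow_const (x := s) (p := a) (Or.inl hs.ne')).neg.exp
  have : Real.exp (-(s^a)) * -(a * s ^ (a-1)) = gA a s := by rw [gA, gE]; ring
  rw [← this]
  exact h

lemma hasDerivAt_gA {s : ℝ} (hs : 0 < s) (a : ℝ) : HasDerivAt (gA a) (gB a s) s := by
  have h1 : HasDerivAt (fun s : ℝ => -(a * s ^ (a-1))) (-(a * ((a-1) * s ^ (a-2)))) s := by
    have h := ((Real.hasDerivAt_rpow_const (x := s) (p := a-1) (Or.inl hs.ne')).const_mul a).neg
    have e : a - 1 - 1 = a - 2 := by ring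
    rw [e] at h
    exact h
  have := h1.mul (hasDerivAt_gE hs a)
  rw [gB]
  exact this

lemma wA_eq (α : ℝ) : (wA (n:=n) (m:=m) α) = fun p => gE (α/4) (rho p) := by
  funext p
  have hx : (Real.sqrt (sqs p.1)) ^ 4 = (sqs p.1)^2 := by
    rw [show (4:ℕ) = 2*2 from rfl, pow_mul, Real.sq_sqrt (sqs_nonneg p.1)]
  have ht : (Real.sqrt (sqs p.2)) ^ 2 = sqs p.2 := Real.sq_sqrt (sqs_nonneg p.2)
  have hk : kN p = rho p ^ ((1:ℝ)/4) := by
    rw [kN, show e2norm p.1 = Real.sqrt (sqs p.1) from rfl,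
      show e2norm p.2 = Real.sqrt (sqs p.2) from rfl, hx, ht]; rfl
  rw [wA, hk, gE, ← Real.rpow_mul (rho_nonneg p), show (1:ℝ)/4*α = α/4 by ring]

lemma hasFDerivAt_wA {p : GrpPt n m} (hp : p ≠ 0) (α : ℝ) :
    HasFDerivAt (wA α) (gA (α/4) (rho p) • Drho p) p := by
  rw [wA_eq α]
  exact (hasDerivAt_gE (rho_pos hp) (α/4)).comp_hasFDerivAt p (hasFDerivAt_rho p)

lemma XD_wA {p : GrpPt n m} (hp : p ≠ 0) (α : ℝ) (j : Fin (2*n)) :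
    XD J j (wA α) p = gA (α/4) (rho p) * Aj J j p := by
  rw [XD_eval (hasFDerivAt_wA hp α) j, comb_smul, comb_Drho]


def mvL (J : Fin m → Matrix (Fin (2*n)) (Fin (2*n)) ℝ) (k : Fin m) (j : Fin (2*n)) :
    GrpPt n m →L[ℝ] ℝ := ∑ i, (J k j i) • pr1 i

lemma mvL_apply (k : Fin m) (j : Fin (2*n)) (v : GrpPt n m) :
    mvL J k j v = (J k).mulVec v.1 j := by
  simp [mvL, ContinuousLinearMap.sum_apply, Matrix.mulVec, dotProduct]

def DAj (J : Fin m → Matrix (Fin (2*n)) (Fin (2*n)) ℝ) (j : Fin (2*n)) (p : GrpPt n m) :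
    GrpPt n m →L[ℝ] ℝ :=
  ((4 * sqs p.1) • pr1 j + (p.1 j) • ((4:ℝ) • Dsq1 p)) +
  (16:ℝ) • ∑ k, ((p.2 k) • (mvL J k j) + ((J k).mulVec p.1 j) • pr2 k)

lemma hasFDerivAt_Aj (j : Fin (2*n)) (p : GrpPt n m) :
    HasFDerivAt (Aj J j) (DAj J j p) p := by
  have h1 : HasFDerivAt (fun q : GrpPt n m => 4 * sqs q.1) ((4:ℝ) • Dsq1 p) p :=
    (hasFDerivAt_sqs1 p).const_mul 4
  have h2 := h1.fun_mul ((pr1 (n:=n) (m:=m) j).hasFDerivAt (x := p))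
  have h3 : ∀ k ∈ Finset.univ, HasFDerivAt (fun q : GrpPt n m => q.2 k * mvL J k j q)
      ((p.2 k) • (mvL J k j) + (mvL J k j p) • pr2 k) p :=
    fun k _ => ((pr2 (n:=n) (m:=m) k).hasFDerivAt (x := p)).mul ((mvL J k j).hasFDerivAt (x := p))
  have h4 := (HasFDerivAt.fun_sum h3).const_mul (16:ℝ)
  have h5 := h2.fun_add h4
  have hfun : (fun q : GrpPt n m => 4 * sqs q.1 * (pr1 (n:=n) (m:=m) j) q
      + 16 * ∑ k, q.2 k * mvL J k j q) = Aj J j := by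
    funext q
    simp only [Aj, pr1_apply, mvL_apply]
  rw [hfun] at h5
  have he : (4 * sqs p.1) • pr1 (n:=n) (m:=m) j + (pr1 (n:=n) (m:=m) j) p • ((4:ℝ) • Dsq1 p) +
      (16:ℝ) • ∑ k, ((p.2 k) • (mvL J k j) + (mvL J k j p) • pr2 k) = DAj J j p := by
    rw [DAj]
    congr 2
    exact Finset.sum_congr rfl fun k _ => by rw [mvL_apply]
  rw [he] at h5
  exact h5

lemma comb_zero (j : Fin (2*n)) (p : GrpPt n m) : comb J j p 0 = 0 := by simp [comb]

lemma comb_sum {ι : Type*} [DecidableEq ι] (j : Fin (2*n)) (p : GrpPt n m) (s : Finset ι)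
    (D : ι → GrpPt n m →L[ℝ] ℝ) :
    comb J j p (∑ k ∈ s, D k) = ∑ k ∈ s, comb J j p (D k) := by
  induction s using Finset.induction with
  | empty => simpa using comb_zero (J:=J) j p
  | insert _ _ h ih => rw [Finset.sum_insert h, comb_add, ih, Finset.sum_insert h]

lemma comb_pr1 (j : Fin (2*n)) (p : GrpPt n m) : comb J j p (pr1 j) = 1 := by
  simp [comb, Pi.single_apply]

lemma comb_pr2 (j : Fin (2*n)) (k : Fin m) (p : GrpPt n m) :
    comb J j p (pr2 k) = (1/2) * (J k).mulVec p.1 j := by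
  simp [comb, Pi.single_apply, mul_ite, Finset.sum_ite_eq, Finset.sum_ite_eq']

lemma comb_Dsq1 (j : Fin (2*n)) (p : GrpPt n m) : comb J j p (Dsq1 p) = 2 * p.1 j := by
  simp [comb, Dsq1, ContinuousLinearMap.sum_apply, Pi.single_apply, mul_ite,
    Finset.sum_ite_eq, Finset.sum_ite_eq']

lemma comb_mvL (hskew : ∀ k, (J k).transpose = -(J k)) (j : Fin (2*n)) (k : Fin m)
    (p : GrpPt n m) : comb J j p (mvL J k j) = 0 := by
  have hdiag : J k j j = 0 := by
    have := congrFun (congrFun (hskew k) j) j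
    rw [Matrix.transpose_apply, Matrix.neg_apply] at this
    linarith
  simp only [comb, mvL_apply]
  have e1 : (J k).mulVec ((Pi.single j 1 : Fin (2*n) → ℝ), (0 : Fin m → ℝ)).1 j = 0 := by
    show (J k).mulVec (Pi.single j 1) j = 0
    simp only [Matrix.mulVec, dotProduct]
    rw [sum_mul_single (fun i => J k j i) j]
    exact hdiag
  have e2 : ∀ k' : Fin m, (J k).mulVec ((0 : Fin (2*n) → ℝ), (Pi.single k' 1 : Fin m → ℝ)).1 j
      = 0 := by
    intro k'
    show (J k).mulVec 0 j = 0
    rw [Matrix.mulVec_zero]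
    rfl
  rw [e1]
  rw [Finset.sum_congr rfl fun k' _ => by rw [e2 k', mul_zero]]
  simp

lemma comb_DAj (hskew : ∀ k, (J k).transpose = -(J k)) (j : Fin (2*n)) (p : GrpPt n m) :
    comb J j p (DAj J j p)
      = 8 * (p.1 j)^2 + 4 * sqs p.1 + 8 * ∑ k, ((J k).mulVec p.1 j)^2 := by
  rw [DAj, comb_add, comb_add, comb_smul, comb_smul, comb_smul, comb_smul, comb_pr1,
    comb_Dsq1, comb_sum]
  rw [Finset.sum_congr rfl fun k _ => by
    rw [comb_add, comb_smul, comb_smul, comb_mvL hskew, comb_pr2]]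
  have : ∑ k, (p.2 k * 0 + (J k).mulVec p.1 j * (1/2 * (J k).mulVec p.1 j))
      = (1/2) * ∑ k, ((J k).mulVec p.1 j)^2 := by
    rw [Finset.mul_sum]
    exact Finset.sum_congr rfl fun k _ => by ring
  rw [this]
  ring

def Fj (J : Fin m → Matrix (Fin (2*n)) (Fin (2*n)) ℝ) (α : ℝ) (j : Fin (2*n)) :
    GrpPt n m → ℝ := fun p => gA (α/4) (rho p) * Aj J j p

lemma hasFDerivAt_Fj {p : GrpPt n m} (hp : p ≠ 0) (α : ℝ) (j : Fin (2*n)) :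
    HasFDerivAt (Fj J α j)
      (gA (α/4) (rho p) • DAj J j p + Aj J j p • (gB (α/4) (rho p) • Drho p)) p :=
  ((hasDerivAt_gA (rho_pos hp) (α/4)).comp_hasFDerivAt p (hasFDerivAt_rho p)).mul
    (hasFDerivAt_Aj j p)

lemma XD_XD_wA (hskew : ∀ k, (J k).transpose = -(J k)) {p : GrpPt n m} (hp : p ≠ 0) (α : ℝ)
    (j : Fin (2*n)) :
    XD J j (XD J j (wA α)) p
      = gB (α/4) (rho p) * (Aj J j p)^2
        + gA (α/4) (rho p) * (8 * (p.1 j)^2 + 4 * sqs p.1 + 8 * ∑ k, ((J k).mulVec p.1 j)^2) := by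
  have hev : XD J j (wA α) =ᶠ[nhds p] Fj J α j := by
    filter_upwards [compl_singleton_mem_nhds hp] with q hq
    exact XD_wA hq α j
  have hfd : fderiv ℝ (XD J j (wA α)) p = fderiv ℝ (Fj J α j) p := hev.fderiv_eq
  have h0 : XD J j (XD J j (wA α)) p = XD J j (Fj J α j) p := by
    rw [XD, hfd, XD]
  rw [h0, XD_eval (hasFDerivAt_Fj hp α j) j, comb_add, comb_smul, comb_smul, comb_smul,
    comb_Drho, comb_DAj hskew]
  ring

def SA (J : Fin m → Matrix (Fin (2*n)) (Fin (2*n)) ℝ) (p : GrpPt n m) : ℝ :=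
  ∑ j, (Aj J j p)^2
def Sf (J : Fin m → Matrix (Fin (2*n)) (Fin (2*n)) ℝ) (p : GrpPt n m) : ℝ :=
  ∑ j, (8 * (p.1 j)^2 + 4 * sqs p.1 + 8 * ∑ k, ((J k).mulVec p.1 j)^2)

lemma gradSq_formula {p : GrpPt n m} (hp : p ≠ 0) (α : ℝ) :
    gradSq J (wA α) p = (gA (α/4) (rho p))^2 * SA J p := by
  rw [gradSq, SA, Finset.mul_sum]
  exact Finset.sum_congr rfl fun j _ => by rw [XD_wA hp α j]; ring

lemma LSub_formula (hskew : ∀ k, (J k).transpose = -(J k)) {p : GrpPt n m} (hp : p ≠ 0)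
    (α : ℝ) :
    LSub J (wA α) p = -(gB (α/4) (rho p) * SA J p + gA (α/4) (rho p) * Sf J p) := by
  rw [LSub, neg_inj]
  rw [Finset.sum_congr rfl fun j _ => XD_XD_wA hskew hp α j, Finset.sum_add_distrib]
  rw [SA, Sf, Finset.mul_sum, Finset.mul_sum]

lemma VA_formula (hskew : ∀ k, (J k).transpose = -(J k)) {p : GrpPt n m} (hp : p ≠ 0)
    (α : ℝ) :
    VA J α p = (1/4) * (α/4)^2 * (rho p ^ ((α/4)-1))^2 * SA J p
      - (1/2) * (α/4) * ((α/4)-1) * (rho p ^ ((α/4)-2)) * SA J p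
      - (1/2) * (α/4) * (rho p ^ ((α/4)-1)) * Sf J p := by
  have hw : wA α p = gE (α/4) (rho p) := congrFun (wA_eq α) p
  rw [VA, gradSq_formula hp α, LSub_formula hskew hp α, hw]
  have hne : gE (α/4) (rho p) ≠ 0 := (gE_pos _ _).ne'
  rw [gA, gB, gA]
  field_simp
  ring


/-! ### Estimates -/

lemma sqs_zero {k : ℕ} : sqs (0 : Fin k → ℝ) = 0 := by simp [sqs]

lemma sqs_single {k : ℕ} (i : Fin k) : sqs (Pi.single i (1:ℝ)) = 1 := by
  rw [sqs, Finset.sum_eq_single i]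
  · simp
  · intro b _ hb; simp [Pi.single_apply, hb]
  · simp

lemma continuous_sqs {k : ℕ} : Continuous (sqs (k := k)) :=
  continuous_finset_sum _ fun i _ => (continuous_apply i).pow 2

def Ct (J : Fin m → Matrix (Fin (2*n)) (Fin (2*n)) ℝ) (p : GrpPt n m) : Fin (2*n) → ℝ :=
  (∑ k, p.2 k • J k).mulVec p.1

lemma mulVec_apply {M : Matrix (Fin (2*n)) (Fin (2*n)) ℝ} {x : Fin (2*n) → ℝ} (j : Fin (2*n)) :
    M.mulVec x j = ∑ i, M j i * x i := rfl

lemma sum_smul_mulVec (t : Fin m → ℝ) (x : Fin (2*n) → ℝ) (j : Fin (2*n)) :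
    (∑ k, t k • J k).mulVec x j = ∑ k, t k * ((J k).mulVec x j) := by
  rw [mulVec_apply]
  have h1 : ∀ i, (∑ k, t k • J k) j i * x i = ∑ k, t k * (J k j i * x i) := by
    intro i
    rw [Matrix.sum_apply, Finset.sum_mul]
    exact Finset.sum_congr rfl fun k _ => by rw [Matrix.smul_apply, smul_eq_mul]; ring
  rw [Finset.sum_congr rfl fun i _ => h1 i, Finset.sum_comm]
  exact Finset.sum_congr rfl fun k _ => by rw [mulVec_apply, Finset.mul_sum]

lemma Aj_eq (j : Fin (2*n)) (p : GrpPt n m) :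
    Aj J j p = 4 * sqs p.1 * p.1 j + 16 * Ct J p j := by
  rw [Aj, Ct, sum_smul_mulVec]

lemma dot_Ct (hskew : ∀ k, (J k).transpose = -(J k)) (p : GrpPt n m) :
    ∑ j, p.1 j * Ct J p j = 0 := by
  have hsk : (∑ k, p.2 k • J k).transpose = -(∑ k : Fin m, p.2 k • J k) := by
    rw [Matrix.transpose_sum, ← Finset.sum_neg_distrib]
    exact Finset.sum_congr rfl fun k _ => by rw [Matrix.transpose_smul, hskew k, smul_neg]
  have key : dotProduct p.1 ((∑ k, p.2 k • J k).mulVec p.1) = 0 := by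
    have h2 : dotProduct p.1 ((∑ k, p.2 k • J k).mulVec p.1)
        = -(dotProduct p.1 ((∑ k, p.2 k • J k).mulVec p.1)) := by
      conv_lhs => rw [Matrix.dotProduct_mulVec, ← Matrix.mulVec_transpose, hsk,
        Matrix.neg_mulVec, neg_dotProduct, dotProduct_comm]
    linarith
  exact key

lemma SA_eq (hskew : ∀ k, (J k).transpose = -(J k)) (p : GrpPt n m) :
    SA J p = 16 * (sqs p.1)^3 + 256 * sqs (Ct J p) := by
  have h : ∀ j, (Aj J j p)^2 = 16*(sqs p.1)^2*(p.1 j)^2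
      + 128*(sqs p.1)*(p.1 j * Ct J p j) + 256*(Ct J p j)^2 := fun j => by
    rw [Aj_eq]; ring
  rw [SA, Finset.sum_congr rfl fun j _ => h j, Finset.sum_add_distrib, Finset.sum_add_distrib,
    ← Finset.mul_sum, ← Finset.mul_sum, ← Finset.mul_sum, dot_Ct hskew]
  rw [show (∑ j, (p.1 j)^2) = sqs p.1 from rfl, show (∑ j, (Ct J p j)^2) = sqs (Ct J p) from rfl]
  ring

def CF (J : Fin m → Matrix (Fin (2*n)) (Fin (2*n)) ℝ) : ℝ := ∑ k, ∑ j, ∑ i, (J k j i)^2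

lemma CF_nonneg : 0 ≤ CF J :=
  Finset.sum_nonneg fun _ _ => Finset.sum_nonneg fun _ _ => Finset.sum_nonneg fun _ _ => sq_nonneg _

lemma mulVec_sq_le (k : Fin m) (j : Fin (2*n)) (x : Fin (2*n) → ℝ) :
    ((J k).mulVec x j)^2 ≤ (∑ i, (J k j i)^2) * sqs x := by
  rw [mulVec_apply]
  exact Finset.sum_mul_sq_le_sq_mul_sq Finset.univ (fun i => J k j i) x

lemma sum_sum_mulVec_sq_le (x : Fin (2*n) → ℝ) :
    ∑ j, ∑ k, ((J k).mulVec x j)^2 ≤ CF J * sqs x := by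
  have h1 : ∑ j, ∑ k, ((J k).mulVec x j)^2 ≤ ∑ j, ∑ k, (∑ i, (J k j i)^2) * sqs x :=
    Finset.sum_le_sum fun j _ => Finset.sum_le_sum fun k _ => mulVec_sq_le k j x
  calc ∑ j, ∑ k, ((J k).mulVec x j)^2 ≤ ∑ j, ∑ k, (∑ i, (J k j i)^2) * sqs x := h1
    _ = CF J * sqs x := by
        rw [Finset.sum_comm, CF, Finset.sum_mul]
        exact Finset.sum_congr rfl fun k _ => by rw [Finset.sum_mul]

lemma sqs_Ct_le (p : GrpPt n m) : sqs (Ct J p) ≤ sqs p.2 * (CF J * sqs p.1) := by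
  have h1 : ∀ j, (Ct J p j)^2 ≤ sqs p.2 * ∑ k, ((J k).mulVec p.1 j)^2 := by
    intro j
    rw [Ct, sum_smul_mulVec]
    exact Finset.sum_mul_sq_le_sq_mul_sq Finset.univ (fun k => p.2 k) (fun k => (J k).mulVec p.1 j)
  calc sqs (Ct J p) ≤ ∑ j, sqs p.2 * ∑ k, ((J k).mulVec p.1 j)^2 :=
        Finset.sum_le_sum fun j _ => h1 j
    _ = sqs p.2 * ∑ j, ∑ k, ((J k).mulVec p.1 j)^2 := by rw [Finset.mul_sum]
    _ ≤ sqs p.2 * (CF J * sqs p.1) :=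
        mul_le_mul_of_nonneg_left (sum_sum_mulVec_sq_le p.1) (sqs_nonneg p.2)

lemma Sf_le (p : GrpPt n m) : Sf J p ≤ (8 + 8*(2*(n:ℝ)) + 8 * CF J) * sqs p.1 := by
  rw [Sf, Finset.sum_add_distrib, Finset.sum_add_distrib]
  have e1 : ∑ j, 8 * (p.1 j)^2 = 8 * sqs p.1 := by
    rw [← Finset.mul_sum]; rfl
  have e2 : ∑ (_j : Fin (2*n)), 4 * sqs p.1 = (2*(n:ℝ)) * (4 * sqs p.1) := by
    rw [Finset.sum_const, Finset.card_univ, Fintype.card_fin, nsmul_eq_mul]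
    push_cast; ring
  have e3 : ∑ j, 8 * ∑ k, ((J k).mulVec p.1 j)^2 ≤ 8 * (CF J * sqs p.1) := by
    rw [← Finset.mul_sum]
    exact mul_le_mul_of_nonneg_left (sum_sum_mulVec_sq_le p.1) (by norm_num)
  rw [e1, e2]
  nlinarith [sqs_nonneg p.1]


lemma metivier_bound (hm : 1 ≤ m) (hn : 1 ≤ n)
    (hMet : ∀ t : Fin m → ℝ, t ≠ 0 → IsUnit (∑ k, t k • J k)) :
    ∃ μ : ℝ, 0 < μ ∧ ∀ (t : Fin m → ℝ) (x : Fin (2*n) → ℝ),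
      μ * (sqs t * sqs x) ≤ sqs ((∑ k, t k • J k).mulVec x) := by
  classical
  set f : (Fin m → ℝ) × (Fin (2*n) → ℝ) → ℝ :=
    fun u => sqs ((∑ k, u.1 k • J k).mulVec u.2) with hf
  have hfc : Continuous f := by
    have hfeq : f = fun u => ∑ j, (∑ k, u.1 k * (∑ i, J k j i * u.2 i))^2 := by
      funext u
      show sqs ((∑ k, u.1 k • J k).mulVec u.2) = _
      rw [show sqs ((∑ k, u.1 k • J k).mulVec u.2)
          = ∑ j, ((∑ k, u.1 k • J k).mulVec u.2 j)^2 from rfl]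
      refine Finset.sum_congr rfl fun j _ => ?_
      rw [sum_smul_mulVec]
      rfl
    rw [hfeq]
    apply continuous_finset_sum
    intro j _
    apply Continuous.pow
    apply continuous_finset_sum
    intro k _
    refine ((continuous_apply k).comp continuous_fst).mul ?_
    apply continuous_finset_sum
    intro i _
    exact continuous_const.mul ((continuous_apply i).comp continuous_snd)
  set S : Set ((Fin m → ℝ) × (Fin (2*n) → ℝ)) := {u | sqs u.1 = 1 ∧ sqs u.2 = 1} with hS
  have hclosed : IsClosed S :=
    (isClosed_eq (continuous_sqs.comp continuous_fst) continuous_const).inter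
      (isClosed_eq (continuous_sqs.comp continuous_snd) continuous_const)
  have hsub : S ⊆ Metric.closedBall 0 1 := by
    intro u hu
    rw [Metric.mem_closedBall, dist_zero_right, Prod.norm_def]
    have hb : ∀ {k : ℕ} (y : Fin k → ℝ), sqs y = 1 → ‖y‖ ≤ 1 := by
      intro k y hy
      rw [pi_norm_le_iff_of_nonneg (by norm_num : (0:ℝ) ≤ 1)]
      intro i
      rw [Real.norm_eq_abs, ← sq_le_one_iff_abs_le_one, ← hy]
      exact Finset.single_le_sum (fun i _ => sq_nonneg (y i)) (Finset.mem_univ i)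
    exact max_le (hb u.1 hu.1) (hb u.2 hu.2)
  have hcomp : IsCompact S :=
    IsCompact.of_isClosed_subset (isCompact_closedBall 0 1) hclosed hsub
  have hne : S.Nonempty := by
    refine ⟨(Pi.single ⟨0, hm⟩ 1, Pi.single ⟨0, by omega⟩ 1), ?_, ?_⟩ <;> exact sqs_single _
  obtain ⟨u, huS, hminOn⟩ := hcomp.exists_isMinOn hne hfc.continuousOn
  have hmin : ∀ v ∈ S, f u ≤ f v := fun v hv => hminOn hv
  have hμpos : 0 < f u := by
    rcases (sqs_nonneg _).lt_or_eq with h | h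
    · exact h
    · exfalso
      have h1 : u.1 ≠ 0 := by
        intro h0
        have := huS.1
        rw [h0, sqs_zero] at this
        norm_num at this
      have hunit := hMet u.1 h1
      obtain ⟨B, hB⟩ := hunit.exists_left_inv
      have hz : (∑ k, u.1 k • J k).mulVec u.2 = 0 := sqs_eq_zero h.symm
      have hu2 : u.2 = 0 := by
        have : B.mulVec ((∑ k, u.1 k • J k).mulVec u.2) = u.2 := by
          rw [Matrix.mulVec_mulVec, hB, Matrix.one_mulVec]
        rw [hz, Matrix.mulVec_zero] at this
        exact this.symm
      have := huS.2
      rw [hu2, sqs_zero] at this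
      norm_num at this
  refine ⟨f u, hμpos, ?_⟩
  intro t x
  by_cases ht : sqs t = 0
  · have ht0 : t = 0 := sqs_eq_zero ht
    have h0 : (∑ k, t k • J k) = 0 := by rw [ht0]; simp
    rw [h0, Matrix.zero_mulVec, ht, sqs_zero]
    simp
  by_cases hx : sqs x = 0
  · have hx0 : x = 0 := sqs_eq_zero hx
    rw [hx, hx0, Matrix.mulVec_zero, sqs_zero]
    simp
  have hst : 0 < sqs t := (sqs_nonneg t).lt_of_ne (Ne.symm ht)
  have hsx : 0 < sqs x := (sqs_nonneg x).lt_of_ne (Ne.symm hx)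
  set rt := Real.sqrt (sqs t) with hrt
  set rx := Real.sqrt (sqs x) with hrx
  have hrtpos : 0 < rt := Real.sqrt_pos.2 hst
  have hrxpos : 0 < rx := Real.sqrt_pos.2 hsx
  have hrt2 : rt^2 = sqs t := Real.sq_sqrt hst.le
  have hrx2 : rx^2 = sqs x := Real.sq_sqrt hsx.le
  set u' : (Fin m → ℝ) × (Fin (2*n) → ℝ) := (rt⁻¹ • t, rx⁻¹ • x) with hu'
  have hu'S : u' ∈ S := by
    constructor
    · show sqs (rt⁻¹ • t) = 1
      rw [sqs_smul]
      field_simp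
      nlinarith
    · show sqs (rx⁻¹ • x) = 1
      rw [sqs_smul]
      field_simp
      nlinarith
  have hkey : f u' = (rt⁻¹)^2 * ((rx⁻¹)^2 * sqs ((∑ k, t k • J k).mulVec x)) := by
    rw [hf]
    show sqs ((∑ k, (rt⁻¹ • t) k • J k).mulVec (rx⁻¹ • x)) = _
    have h1 : (∑ k, (rt⁻¹ • t) k • J k) = rt⁻¹ • ∑ k, t k • J k := by
      rw [Finset.smul_sum]
      exact Finset.sum_congr rfl fun k _ => by
        rw [Pi.smul_apply, smul_eq_mul, ← smul_smul]
    rw [h1, Matrix.smul_mulVec, Matrix.mulVec_smul, sqs_smul, sqs_smul]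
    try ring
  have hle := hmin u' hu'S
  rw [hkey] at hle
  have hinv : (rt⁻¹)^2 * (rx⁻¹)^2 * (sqs t * sqs x) = 1 := by
    rw [← hrt2, ← hrx2]
    field_simp
  nlinarith [sqs_nonneg ((∑ k, t k • J k).mulVec x), mul_pos hst hsx,
    sq_nonneg (rt⁻¹ * rx⁻¹)]


lemma SA_nonneg (p : GrpPt n m) : 0 ≤ SA J p := Finset.sum_nonneg fun _ _ => sq_nonneg _

set_option maxHeartbeats 1000000 in
theorem main_bound (hn : 1 ≤ n) (hm : 1 ≤ m)
    (hskew : ∀ k, (J k).transpose = -(J k))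
    (hMet : ∀ t : Fin m → ℝ, t ≠ 0 → IsUnit (∑ k, t k • J k)) :
    ∀ α : ℝ, 2 ≤ α → ∃ K : ℝ, ∀ p : GrpPt n m, p ≠ 0 → K ≤ VA J α p := by
  intro α hα
  obtain ⟨μ, hμpos, hμ⟩ := metivier_bound hm hn hMet
  set a : ℝ := α/4 with ha_def
  have ha : (1:ℝ)/2 ≤ a := by rw [ha_def]; linarith
  have hapos : 0 < a := by linarith
  set μ' : ℝ := min 1 μ with hμ'_def
  have hμ'pos : 0 < μ' := lt_min one_pos hμpos
  have hμ'le1 : μ' ≤ 1 := min_le_left _ _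
  have hμ'leμ : μ' ≤ μ := min_le_right _ _
  set C2 : ℝ := 16 + 16 * CF J with hC2_def
  set C0 : ℝ := 8 + 8*(2*(n:ℝ)) + 8 * CF J with hC0_def
  have hC2pos : 0 < C2 := by have := CF_nonneg (J := J); rw [hC2_def]; linarith
  have hC0pos : 0 < C0 := by
    have := CF_nonneg (J := J)
    have : (0:ℝ) ≤ (n:ℝ) := Nat.cast_nonneg n
    rw [hC0_def]
    have := CF_nonneg (J := J)
    positivity
  set D : ℝ := (1/2)*a*|a - 1| * C2 + (1/2)*a*C0 with hD_def
  have hDpos : 0 ≤ D := by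
    have h1 : 0 ≤ |a - 1| := abs_nonneg _
    rw [hD_def]
    positivity
  set MM : ℝ := D / (4*a^2*μ') with hMM_def
  refine ⟨-(D * max 1 MM), ?_⟩
  intro p hp
  set s : ℝ := rho p with hs_def
  have hspos : 0 < s := rho_pos hp
  set X : ℝ := sqs p.1 with hX_def
  set T : ℝ := sqs p.2 with hT_def
  have hX : 0 ≤ X := sqs_nonneg _
  have hT : 0 ≤ T := sqs_nonneg _
  have hsXT : s = X^2 + 16*T := rfl
  set q : ℝ := s ^ (a-1) with hq_def
  set r : ℝ := s ^ (a-2) with hr_def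
  set u : ℝ := s ^ a with hu_def
  have hqpos : 0 < q := Real.rpow_pos_of_pos hspos _
  have hrpos : 0 < r := Real.rpow_pos_of_pos hspos _
  have hupos : 0 < u := Real.rpow_pos_of_pos hspos _
  have hqs : q * s = u := by
    rw [hq_def, hu_def]
    have h := (Real.rpow_add hspos (a-1) 1).symm
    rw [Real.rpow_one, show a - 1 + 1 = a by ring] at h
    exact h
  have hrs : r * s = q := by
    rw [hq_def, hr_def]
    have h := (Real.rpow_add hspos (a-2) 1).symm
    rw [Real.rpow_one, show a - 2 + 1 = a - 1 by ring] at h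
    exact h
  -- SA bounds
  have hCt : μ * (T * X) ≤ sqs (Ct J p) := by
    rw [Ct]
    exact hμ p.2 p.1
  have hSA : SA J p = 16 * X^3 + 256 * sqs (Ct J p) := SA_eq hskew p
  have hCtup : sqs (Ct J p) ≤ T * (CF J * X) := sqs_Ct_le p
  have hSAlow : 16*μ'*(X*s) ≤ SA J p := by
    rw [hSA, hsXT]
    have h1 : μ' * X^3 ≤ X^3 := mul_le_of_le_one_left (pow_nonneg hX 3) hμ'le1
    have h2 : μ' * (T*X) ≤ μ * (T*X) :=
      mul_le_mul_of_nonneg_right hμ'leμ (mul_nonneg hT hX)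
    linarith [hCt]
  have hSAup : SA J p ≤ C2 * (X*s) := by
    rw [hSA, hsXT, hC2_def]
    linarith [hCtup, mul_nonneg hT hX,
      mul_nonneg (CF_nonneg (J := J)) (pow_nonneg hX 3)]
  have hSfup : Sf J p ≤ C0 * X := by rw [hC0_def]; exact Sf_le p
  have hSf0 : 0 ≤ Sf J p := by
    rw [Sf]
    refine Finset.sum_nonneg fun j _ => ?_
    have h1 : 0 ≤ ∑ k, ((J k).mulVec p.1 j)^2 := Finset.sum_nonneg fun _ _ => sq_nonneg _
    linarith [sq_nonneg (p.1 j), hX]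
  -- the three terms
  have hT1 : 4*a^2*μ'*(X*q*u) ≤ (1/4)*a^2*q^2*SA J p := by
    have h := mul_le_mul_of_nonneg_left hSAlow
      (by positivity : (0:ℝ) ≤ (1/4)*a^2*q^2)
    calc 4*a^2*μ'*(X*q*u) = (1/4)*a^2*q^2*(16*μ'*(X*s)) := by rw [← hqs]; ring
      _ ≤ (1/4)*a^2*q^2*SA J p := h
  have hT2 : (1/2)*a*(a-1)*r*SA J p ≤ (1/2)*a*|a - 1| * C2*(X*q) := by
    rcases le_or_gt 1 a with h1 | h1
    · have habs : |a - 1| = a-1 := abs_of_nonneg (by linarith)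
      have h := mul_le_mul_of_nonneg_left hSAup
        (mul_nonneg (mul_nonneg (mul_nonneg (by norm_num : (0:ℝ) ≤ 1/2) hapos.le)
          (by linarith : (0:ℝ) ≤ a-1)) hrpos.le)
      calc (1/2)*a*(a-1)*r*SA J p ≤ (1/2)*a*(a-1)*r*(C2*(X*s)) := h
        _ = (1/2)*a*(a-1)*C2*(X*(r*s)) := by ring
        _ = (1/2)*a*|a - 1| * C2*(X*q) := by rw [hrs, habs]
    · have hSA0 := SA_nonneg (J := J) p
      have hprod : 0 ≤ a * ((1 - a) * (r * SA J p)) :=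
        mul_nonneg hapos.le (mul_nonneg (by linarith) (mul_nonneg hrpos.le hSA0))
      have hle0 : (1/2)*a*(a-1)*r*SA J p ≤ 0 := by nlinarith [hprod]
      have hge0 : 0 ≤ (1/2)*a*|a - 1| * C2*(X*q) :=
        mul_nonneg (mul_nonneg (mul_nonneg (mul_nonneg (by norm_num) hapos.le)
          (abs_nonneg _)) hC2pos.le) (mul_nonneg hX hqpos.le)
      linarith
  have hT3 : (1/2)*a*q*Sf J p ≤ (1/2)*a*C0*(X*q) := by
    have h := mul_le_mul_of_nonneg_left hSfup (by positivity : (0:ℝ) ≤ (1/2)*a*q)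
    calc (1/2)*a*q*Sf J p ≤ (1/2)*a*q*(C0*X) := h
      _ = (1/2)*a*C0*(X*q) := by ring
  have hVAform := VA_formula hskew hp α
  rw [← ha_def, ← hs_def, ← hq_def, ← hr_def] at hVAform
  have hVAlow : 4*a^2*μ'*(X*q*u) - D*(X*q) ≤ VA J α p := by
    rw [hVAform, hD_def]
    linarith [hT1, hT2, hT3]
  -- case analysis
  have hGpos : 0 ≤ X*q := mul_nonneg hX hqpos.le
  rcases le_or_gt D (4*a^2*μ'*u) with hcase | hcase
  · have h1 : 0 ≤ (X*q) * (4*a^2*μ'*u - D) := mul_nonneg hGpos (by linarith)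
    have h2 : 0 ≤ D * max 1 MM :=
      mul_nonneg hDpos (le_trans zero_le_one (le_max_left _ _))
    linarith [hVAlow, h1, h2]
  · -- here u < D/(4a²μ'), VA ≥ -D*(X*q), and X*q ≤ max 1 MM
    have hXq : X*q ≤ max 1 MM := by
      have hXsq : X^2 ≤ s := by rw [hsXT]; linarith
      have hXsqrt : X ≤ Real.sqrt s := (Real.le_sqrt hX hspos.le).2 hXsq
      have hsqrt : Real.sqrt s = s ^ ((1:ℝ)/2) := Real.sqrt_eq_rpow s
      have hprod : Real.sqrt s * q = s ^ (a - 1/2) := by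
        rw [hsqrt, hq_def, ← Real.rpow_add hspos, show (1:ℝ)/2 + (a-1) = a - 1/2 by ring]
      have hXqle : X*q ≤ s ^ (a - 1/2) := by
        rw [← hprod]
        exact mul_le_mul_of_nonneg_right hXsqrt hqpos.le
      rcases le_or_gt s 1 with hs1 | hs1
      · have : s ^ (a - 1/2) ≤ 1 := Real.rpow_le_one hspos.le hs1 (by linarith)
        exact le_trans hXqle (le_trans this (le_max_left _ _))
      · have h1 : s ^ (a - 1/2) ≤ s ^ a :=
          Real.rpow_le_rpow_of_exponent_le hs1.le (by linarith)
        have h2 : u ≤ MM := by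
          rw [hMM_def]
          rw [le_div_iff₀ (by positivity)]
          linarith
        exact le_trans hXqle (le_trans h1 (le_trans h2 (le_max_right _ _)))
    have h3 : D * (X*q) ≤ D * max 1 MM := mul_le_mul_of_nonneg_left hXq hDpos
    linarith [hVAlow, h3,
      mul_nonneg (mul_nonneg (by positivity : (0:ℝ) ≤ 4*a^2*μ') hGpos) hupos.le]

end Met

/-- For `α ≥ 2` the potential `V_α` is bounded from below on `G*`. -/
theorem potential_bounded_below (n m : ℕ) (hn : 1 ≤ n) (hm : 1 ≤ m)
    (J : Fin m → Matrix (Fin (2*n)) (Fin (2*n)) ℝ)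
    (hskew : ∀ k, (J k).transpose = -(J k))
    (hMet : ∀ t : Fin m → ℝ, t ≠ 0 → IsUnit (∑ k, t k • J k)) :
    ∀ α : ℝ, 2 ≤ α → ∃ K : ℝ, ∀ p : GrpPt n m, p ≠ 0 → K ≤ VA J α p := by
  exact Met.main_bound (J := J) hn hm hskew hMet

end
end
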